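/- arXiv:2309.14607 — 3 statements merged into one kernel-verified Lean document; each statement's English description precedes it below -/
import Mathlib

section
/- Let X be a quasi-Banach space over 𝔽 = ℝ or ℂ and let 𝒳 = (x_n)_{n∈ℕ} be a basis of X. Then 𝒳 is greedy if and only if 𝒳 is relaxed greedy for polynomials with constant coefficients (RGPCC), i.e., there exists C > 0 such that ‖f − P_A(f)‖ ≤ C·ρ_m(f) for every f ∈ X, every m ∈ ℕ, and every greedy set A of f of cardinality m. -/
open scoped BigOperators

noncomputable section

/-- A basis of a quasi-Banach space over `𝕜` (`𝕜 = ℝ` or `ℂ`), bundled with the quasi-norm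
`N`, the basis vectors `e`, and the biorthogonal functionals `coord`. -/
structure QBasis (𝕜 : Type*) [RCLike 𝕜] (X : Type*) [AddCommGroup X] [Module 𝕜 X] :
    Type _ where
  /-- the quasi-norm of the space -/
  N : X → ℝ
  N_nonneg : ∀ f : X, 0 ≤ N f
  N_eq_zero_iff : ∀ f : X, N f = 0 ↔ f = 0
  N_smul : ∀ (t : 𝕜) (f : X), N (t • f) = ‖t‖ * N f
  quasi_triangle : ∃ c : ℝ, 1 ≤ c ∧ ∀ f g : X, N (f + g) ≤ c * (N f + N g)
  /-- completeness with respect to the quasi-norm -/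
  complete : ∀ u : ℕ → X,
      (∀ ε : ℝ, 0 < ε → ∃ n₀ : ℕ, ∀ m n : ℕ, n₀ ≤ m → n₀ ≤ n → N (u m - u n) < ε) →
      ∃ f : X, ∀ ε : ℝ, 0 < ε → ∃ n₀ : ℕ, ∀ n : ℕ, n₀ ≤ n → N (u n - f) < ε
  /-- the basis vectors -/
  e : ℕ → X
  /-- the biorthogonal functionals -/
  coord : ℕ → X →ₗ[𝕜] 𝕜
  biorth : ∀ n m : ℕ, coord n (e m) = if n = m then (1 : 𝕜) else 0
  /-- the closed linear span of the basis vectors is the whole space -/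
  dense_span : ∀ f : X, ∀ ε : ℝ, 0 < ε →
      ∃ g ∈ Submodule.span 𝕜 (Set.range e), N (f - g) < ε
  e_bdd : ∃ c : ℝ, ∀ n : ℕ, N (e n) ≤ c
  coord_bdd : ∃ c : ℝ, ∀ (n : ℕ) (f : X), ‖coord n f‖ ≤ c * N f

namespace QBasis

variable {𝕜 : Type*} [RCLike 𝕜] {X : Type*} [AddCommGroup X] [Module 𝕜 X]

/-- The projection `P_A f = ∑_{n ∈ A} x_n^*(f) x_n`. -/
def proj (bs : QBasis 𝕜 X) (A : Finset ℕ) (f : X) : X :=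
  ∑ n ∈ A, bs.coord n f • bs.e n

/-- `A` is a greedy set of `f`: `min_{n ∈ A} |x_n^*(f)| ≥ max_{m ∉ A} |x_m^*(f)|`. -/
def IsGreedySet (bs : QBasis 𝕜 X) (f : X) (A : Finset ℕ) : Prop :=
  ∀ n ∈ A, ∀ m : ℕ, m ∉ A → ‖bs.coord m f‖ ≤ ‖bs.coord n f‖

/-- `𝟙_{ε,A} = ∑_{j ∈ A} ε_j x_j`. -/
def indSign (bs : QBasis 𝕜 X) (ε : ℕ → 𝕜) (A : Finset ℕ) : X :=
  ∑ j ∈ A, ε j • bs.e j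

/-- `𝟙_A = ∑_{j ∈ A} x_j`. -/
def ind (bs : QBasis 𝕜 X) (A : Finset ℕ) : X := ∑ j ∈ A, bs.e j

/-- `ε` is a sign on `A`. -/
def IsSign (ε : ℕ → 𝕜) (A : Finset ℕ) : Prop := ∀ j ∈ A, ‖ε j‖ = 1

/-- `min_{n ∈ A} |x_n^*(f)|`. -/
def minCoef (bs : QBasis 𝕜 X) (f : X) (A : Finset ℕ) : ℝ :=
  sInf ((fun n => ‖bs.coord n f‖) '' (A : Set ℕ))

/-- `‖f − P_A(f)‖ ≤ C·σ_m(f)` for every greedy set `A` of cardinality `m`. -/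
def IsGreedyWith (bs : QBasis 𝕜 X) (C : ℝ) : Prop :=
  ∀ (f : X) (A B : Finset ℕ) (a : ℕ → 𝕜), bs.IsGreedySet f A → B.card ≤ A.card →
    bs.N (f - bs.proj A f) ≤ C * bs.N (f - ∑ j ∈ B, a j • bs.e j)

/-- `‖f − P_A(f)‖ ≤ C·ρ_m(f)` for every greedy set `A` of cardinality `m`, where
`ρ_m(f) = inf {‖f − α 𝟙_{ε,B}‖ : |B| = m, ε sign}` and `α = min_{n ∈ A} |x_n^*(f)|`. -/
def IsRGPCCWith (bs : QBasis 𝕜 X) (C : ℝ) : Prop :=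
  ∀ (f : X) (A B : Finset ℕ) (ε : ℕ → 𝕜), bs.IsGreedySet f A → B.card = A.card →
    IsSign ε B →
    bs.N (f - bs.proj A f) ≤ C * bs.N (f - ((bs.minCoef f A : ℝ) : 𝕜) • bs.indSign ε B)

/-- `‖f − P_A(f)‖ ≤ C·ϱ_m(f)` for every greedy set `A` of cardinality `m`, where
`ϱ_m(f) = inf {‖f − α 𝟙_B‖ : |B| = m}` and `α = min_{n ∈ A} |x_n^*(f)|`. -/
def IsURGPCCWith (bs : QBasis 𝕜 X) (C : ℝ) : Prop :=
  ∀ (f : X) (A B : Finset ℕ), bs.IsGreedySet f A → B.card = A.card →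
    bs.N (f - bs.proj A f) ≤ C * bs.N (f - ((bs.minCoef f A : ℝ) : 𝕜) • bs.ind B)

end QBasis

namespace QBasisAux
open Finset
variable {𝕜 : Type*} [RCLike 𝕜] {X : Type*} [AddCommGroup X] [Module 𝕜 X] (bs : QBasis 𝕜 X)

lemma N_zero : bs.N 0 = 0 := (bs.N_eq_zero_iff 0).2 rfl

lemma N_neg (x : X) : bs.N (-x) = bs.N x := by
  have := bs.N_smul (-1 : 𝕜) x
  simpa using this

lemma N_sub_comm (x y : X) : bs.N (x - y) = bs.N (y - x) := by
  rw [← N_neg bs (y - x), neg_sub]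

lemma N_smulR (t : ℝ) (ht : 0 ≤ t) (x : X) : bs.N (((t : ℝ) : 𝕜) • x) = t * bs.N x := by
  rw [bs.N_smul]
  simp [abs_of_nonneg ht]

lemma coord_sum (A : Finset ℕ) (a : ℕ → 𝕜) (n : ℕ) :
    bs.coord n (∑ j ∈ A, a j • bs.e j) = if n ∈ A then a n else 0 := by
  rw [map_sum]
  simp only [map_smul, bs.biorth, smul_eq_mul, mul_ite, mul_one, mul_zero]
  simp [Finset.sum_ite_eq A n a]

lemma coord_indSign (ε : ℕ → 𝕜) (A : Finset ℕ) (n : ℕ) :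
    bs.coord n (bs.indSign ε A) = if n ∈ A then ε n else 0 := coord_sum bs A ε n

lemma coord_proj (D : Finset ℕ) (f : X) (n : ℕ) :
    bs.coord n (bs.proj D f) = if n ∈ D then bs.coord n f else 0 := by
  classical
  unfold QBasis.proj
  rw [map_sum]
  simp only [map_smul, bs.biorth, smul_eq_mul, mul_ite, mul_one, mul_zero]
  simp [Finset.sum_ite_eq D n (fun j => bs.coord j f)]

end QBasisAux
namespace QBasisAux
open Finset
variable {𝕜 : Type*} [RCLike 𝕜] {X : Type*} [AddCommGroup X] [Module 𝕜 X] (bs : QBasis 𝕜 X)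

lemma minCoef_eq_inf' (f : X) (A : Finset ℕ) (hA : A.Nonempty) :
    bs.minCoef f A = A.inf' hA (fun n => ‖bs.coord n f‖) := by
  rw [QBasis.minCoef, Finset.inf'_eq_csInf_image]

lemma minCoef_le (f : X) {A : Finset ℕ} {j : ℕ} (hj : j ∈ A) :
    bs.minCoef f A ≤ ‖bs.coord j f‖ := by
  rw [minCoef_eq_inf' bs f A ⟨j, hj⟩]
  exact Finset.inf'_le _ hj

lemma le_minCoef (f : X) {A : Finset ℕ} (hA : A.Nonempty) {b : ℝ}
    (h : ∀ j ∈ A, b ≤ ‖bs.coord j f‖) : b ≤ bs.minCoef f A := by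
  rw [minCoef_eq_inf' bs f A hA]
  exact Finset.le_inf' hA _ h

lemma minCoef_nonneg (f : X) (A : Finset ℕ) : 0 ≤ bs.minCoef f A := by
  rcases A.eq_empty_or_nonempty with rfl | hA
  · simp [QBasis.minCoef, Real.sInf_empty]
  · exact le_minCoef bs f hA (fun j _ => norm_nonneg _)

lemma exists_minCoef (f : X) {A : Finset ℕ} (hA : A.Nonempty) :
    ∃ j ∈ A, bs.minCoef f A = ‖bs.coord j f‖ := by
  rw [minCoef_eq_inf' bs f A hA]
  obtain ⟨j, hj, h⟩ := Finset.exists_mem_eq_inf' hA (fun n => ‖bs.coord n f‖)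
  exact ⟨j, hj, h⟩

lemma N_sum_le {c : ℝ} (hc : 1 ≤ c)
    (hN : ∀ f g : X, bs.N (f + g) ≤ c * (bs.N f + bs.N g))
    (S : Finset ℕ) (v : ℕ → X) :
    bs.N (∑ j ∈ S, v j) ≤ c ^ S.card * ∑ j ∈ S, bs.N (v j) := by
  classical
  induction S using Finset.cons_induction with
  | empty => simp [N_zero bs]
  | cons a S ha ih =>
    rw [Finset.sum_cons, Finset.card_cons, Finset.sum_cons]
    have h1 := hN (v a) (∑ j ∈ S, v j)
    have hc0 : 0 ≤ c := le_trans zero_le_one hc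
    have hpow : (1:ℝ) ≤ c ^ S.card := one_le_pow₀ hc
    calc bs.N (v a + ∑ j ∈ S, v j) ≤ c * (bs.N (v a) + bs.N (∑ j ∈ S, v j)) := h1
      _ ≤ c * (c ^ S.card * bs.N (v a) + c ^ S.card * ∑ j ∈ S, bs.N (v j)) := by
          apply mul_le_mul_of_nonneg_left _ hc0
          have := bs.N_nonneg (v a)
          nlinarith [ih]
      _ = c ^ (S.card + 1) * (bs.N (v a) + ∑ j ∈ S, bs.N (v j)) := by ring

lemma exists_fresh (n : ℕ) (T : Finset ℕ) :
    ∃ F : Finset ℕ, F.card = n ∧ Disjoint F T := by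
  refine ⟨(Finset.range n).image (fun i => i + (T.sup id + 1)), ?_, ?_⟩
  · rw [Finset.card_image_of_injective _ (add_left_injective _), Finset.card_range]
  · rw [Finset.disjoint_left]
    intro a ha haT
    simp only [Finset.mem_image, Finset.mem_range] at ha
    obtain ⟨i, _, rfl⟩ := ha
    have : i + (T.sup id + 1) ≤ T.sup id := Finset.le_sup (f := id) haT
    omega

end QBasisAux
namespace QBasisAux
open Finset
variable {𝕜 : Type*} [RCLike 𝕜] {X : Type*} [AddCommGroup X] [Module 𝕜 X] (bs : QBasis 𝕜 X)

/-- the phase of the coordinates of `f` -/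
def phase (f : X) : ℕ → 𝕜 := fun j =>
  if bs.coord j f = 0 then 1 else bs.coord j f / ((‖bs.coord j f‖ : ℝ) : 𝕜)

lemma norm_phase (f : X) (j : ℕ) : ‖phase bs f j‖ = 1 := by
  rw [phase]
  by_cases h : bs.coord j f = 0
  · simp [h]
  · rw [if_neg h, norm_div, RCLike.norm_ofReal, abs_of_nonneg (norm_nonneg _),
      div_self (norm_ne_zero_iff.mpr h)]

lemma isSign_phase (f : X) (A : Finset ℕ) : QBasis.IsSign (phase bs f) A :=
  fun j _ => norm_phase bs f j

lemma coord_eq_phase (f : X) (j : ℕ) :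
    bs.coord j f = ((‖bs.coord j f‖ : ℝ) : 𝕜) * phase bs f j := by
  rw [phase]
  by_cases h : bs.coord j f = 0
  · simp [h]
  · rw [if_neg h]
    have hx : ((‖bs.coord j f‖ : ℝ) : 𝕜) ≠ 0 :=
      RCLike.ofReal_ne_zero.mpr (norm_ne_zero_iff.mpr h)
    field_simp

lemma proj_add (D : Finset ℕ) (f g : X) :
    bs.proj D (f + g) = bs.proj D f + bs.proj D g := by
  simp [QBasis.proj, add_smul, Finset.sum_add_distrib]

lemma proj_sub (D : Finset ℕ) (f g : X) :
    bs.proj D (f - g) = bs.proj D f - bs.proj D g := by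
  simp [QBasis.proj, sub_smul, Finset.sum_sub_distrib]

lemma proj_smul (D : Finset ℕ) (a : 𝕜) (f : X) :
    bs.proj D (a • f) = a • bs.proj D f := by
  simp [QBasis.proj, Finset.smul_sum, smul_smul]

lemma proj_indSign_self (ε : ℕ → 𝕜) (D : Finset ℕ) :
    bs.proj D (bs.indSign ε D) = bs.indSign ε D := by
  rw [QBasis.proj, QBasis.indSign]
  apply Finset.sum_congr rfl
  intro n hn
  rw [show (∑ j ∈ D, ε j • bs.e j) = bs.indSign ε D from rfl, coord_indSign, if_pos hn]

lemma exists_small_coord (κ : ℝ) (hκ : ∀ (n : ℕ) (f : X), ‖bs.coord n f‖ ≤ κ * bs.N f)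
    (f : X) (D : Finset ℕ) {δ : ℝ} (hδ : 0 < δ) :
    ∃ k, k ∉ D ∧ ‖bs.coord k f‖ < δ := by
  classical
  set κ' : ℝ := max κ 1 with hκ'def
  have hκ'pos : 0 < κ' := lt_of_lt_of_le one_pos (le_max_right _ _)
  have hκ' : ∀ (n : ℕ) (h : X), ‖bs.coord n h‖ ≤ κ' * bs.N h := fun n h =>
    le_trans (hκ n h) (mul_le_mul_of_nonneg_right (le_max_left _ _) (bs.N_nonneg h))
  obtain ⟨g, hg, hgN⟩ := bs.dense_span f (δ / κ') (div_pos hδ hκ'pos)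
  rw [Finsupp.mem_span_range_iff_exists_finsupp] at hg
  obtain ⟨co, hco⟩ := hg
  obtain ⟨k, hk⟩ := Infinite.exists_notMem_finset (D ∪ co.support)
  rw [Finset.mem_union, not_or] at hk
  refine ⟨k, hk.1, ?_⟩
  have hcoordg : bs.coord k g = 0 := by
    rw [← hco, Finsupp.sum, map_sum]
    apply Finset.sum_eq_zero
    intro i hi
    have hne : k ≠ i := fun h => hk.2 (h ▸ hi)
    rw [map_smul, bs.biorth, if_neg hne, smul_zero]
  have : bs.coord k f = bs.coord k (f - g) := by rw [map_sub, hcoordg, sub_zero]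
  rw [this]
  calc ‖bs.coord k (f - g)‖ ≤ κ' * bs.N (f - g) := hκ' k _
    _ < κ' * (δ / κ') := by exact mul_lt_mul_of_pos_left hgN hκ'pos
    _ = δ := by field_simp

end QBasisAux
namespace QBasisAux
open Finset
variable {𝕜 : Type*} [RCLike 𝕜] {X : Type*} [AddCommGroup X] [Module 𝕜 X] (bs : QBasis 𝕜 X)

/-- sign democracy -/
lemma demS {C : ℝ} (hC : 0 ≤ C) (hRG : bs.IsRGPCCWith C) (S E : Finset ℕ)
    (δ δ' : ℕ → 𝕜) (hdisj : Disjoint S E) (hcard : E.card = S.card)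
    (hδ : QBasis.IsSign δ S) (hδ' : QBasis.IsSign δ' E) :
    bs.N (bs.indSign δ' E) ≤ C * bs.N (bs.indSign δ S) := by
  classical
  rcases S.eq_empty_or_nonempty with rfl | hS
  · rw [Finset.card_empty, Finset.card_eq_zero] at hcard
    subst hcard
    simp [QBasis.indSign, N_zero bs, hC, bs.N_nonneg]
  set ε : ℕ → 𝕜 := fun j => if j ∈ S then δ j else δ' j with hε
  set f := bs.indSign ε (S ∪ E) with hf
  have hsplit : f = bs.indSign δ S + bs.indSign δ' E := by
    rw [hf, QBasis.indSign, Finset.sum_union hdisj]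
    congr 1
    · exact Finset.sum_congr rfl (fun j hj => by rw [hε]; simp [hj])
    · refine Finset.sum_congr rfl (fun j hj => ?_)
      have : j ∉ S := Finset.disjoint_right.mp hdisj hj
      rw [hε]; simp [this]
  have hcoord : ∀ n, bs.coord n f = if n ∈ S ∪ E then ε n else 0 := fun n =>
    coord_indSign bs ε (S ∪ E) n
  have hnorm1 : ∀ n ∈ S, ‖bs.coord n f‖ = 1 := by
    intro n hn
    rw [hcoord n, if_pos (Finset.mem_union_left _ hn)]
    simpa [hε, hn] using hδ n hn
  have hgreedy : bs.IsGreedySet f S := by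
    intro n hn m hm
    rw [hnorm1 n hn, hcoord m]
    by_cases hmE : m ∈ S ∪ E
    · rw [if_pos hmE]
      have hmE' : m ∈ E := by
        rcases Finset.mem_union.mp hmE with h | h
        · exact absurd h hm
        · exact h
      have : ε m = δ' m := by rw [hε]; simp [hm]
      rw [this, hδ' m hmE']
    · rw [if_neg hmE]; simp
  have hmin : bs.minCoef f S = 1 := by
    apply le_antisymm
    · obtain ⟨j, hj⟩ := hS
      calc bs.minCoef f S ≤ ‖bs.coord j f‖ := minCoef_le bs f hj
        _ = 1 := hnorm1 j hj
    · exact le_minCoef bs f hS (fun j hj => (hnorm1 j hj).ge)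
  have hproj : bs.proj S f = bs.indSign δ S := by
    rw [QBasis.proj, QBasis.indSign]
    refine Finset.sum_congr rfl (fun n hn => ?_)
    rw [hcoord n, if_pos (Finset.mem_union_left _ hn)]
    congr 1
    rw [hε]; simp [hn]
  have h := hRG f S E δ' hgreedy hcard hδ'
  rw [hmin] at h
  have h1 : f - bs.proj S f = bs.indSign δ' E := by rw [hproj, hsplit]; abel
  have h2 : f - (((1:ℝ) : 𝕜)) • bs.indSign δ' E = bs.indSign δ S := by
    rw [hsplit]; push_cast; rw [one_smul]; abel
  rwa [h1, h2] at h

end QBasisAux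
namespace QBasisAux
open Finset
variable {𝕜 : Type*} [RCLike 𝕜] {X : Type*} [AddCommGroup X] [Module 𝕜 X] (bs : QBasis 𝕜 X)

/-- the key self-improvement: the RGPCC inequality holds for every finite set `D`,
with the truncation by the smallest coefficient over `D`. -/
lemma H' {C κ : ℝ} (hRG : bs.IsRGPCCWith C) (hκ0 : 0 ≤ κ)
    (hκ : ∀ (n : ℕ) (f : X), ‖bs.coord n f‖ ≤ κ * bs.N f)
    (f : X) (D : Finset ℕ) (hD : D.Nonempty) :
    bs.N (f - bs.proj D f) ≤
      C * bs.N (f - ((bs.minCoef f D : ℝ) : 𝕜) • bs.indSign (phase bs f) D) := by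
  classical
  set t : ℝ := κ * bs.N f with ht
  have ht0 : 0 ≤ t := mul_nonneg hκ0 (bs.N_nonneg f)
  set ε := phase bs f with hεdef
  set g := f + ((t : ℝ) : 𝕜) • bs.indSign ε D with hg
  set μ := bs.minCoef f D with hμ
  have hcoordg : ∀ n, bs.coord n g =
      bs.coord n f + ((t : ℝ) : 𝕜) * (if n ∈ D then ε n else 0) := by
    intro n
    rw [hg, map_add, map_smul, coord_indSign, smul_eq_mul]
  have hcoordD : ∀ n ∈ D, bs.coord n g = (((‖bs.coord n f‖ + t : ℝ)) : 𝕜) * ε n := by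
    intro n hn
    rw [hcoordg n, if_pos hn]
    nth_rewrite 1 [coord_eq_phase bs f n]
    push_cast
    ring
  have hnormD : ∀ n ∈ D, ‖bs.coord n g‖ = ‖bs.coord n f‖ + t := by
    intro n hn
    rw [hcoordD n hn, norm_mul, norm_phase bs f n, mul_one, RCLike.norm_ofReal,
      abs_of_nonneg (by positivity)]
  have hcoordnD : ∀ n, n ∉ D → bs.coord n g = bs.coord n f := by
    intro n hn
    rw [hcoordg n, if_neg hn, mul_zero, add_zero]
  have hgreedy : bs.IsGreedySet g D := by
    intro n hn m hm
    rw [hnormD n hn, hcoordnD m hm]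
    calc ‖bs.coord m f‖ ≤ κ * bs.N f := hκ m f
      _ = t := ht.symm
      _ ≤ ‖bs.coord n f‖ + t := le_add_of_nonneg_left (norm_nonneg _)
  have hming : bs.minCoef g D = μ + t := by
    apply le_antisymm
    · obtain ⟨j, hj, hjv⟩ := exists_minCoef bs f hD
      calc bs.minCoef g D ≤ ‖bs.coord j g‖ := minCoef_le bs g hj
        _ = ‖bs.coord j f‖ + t := hnormD j hj
        _ = μ + t := by rw [← hjv, hμ]
    · refine le_minCoef bs g hD (fun j hj => ?_)
      rw [hnormD j hj]
      exact add_le_add (minCoef_le bs f hj) le_rfl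
  have hprojg : g - bs.proj D g = f - bs.proj D f := by
    rw [hg, proj_add, proj_smul, proj_indSign_self]
    abel
  have h := hRG g D D ε hgreedy rfl (isSign_phase bs f D)
  rw [hprojg, hming] at h
  have h2 : g - (((μ + t : ℝ)) : 𝕜) • bs.indSign ε D =
      f - ((μ : ℝ) : 𝕜) • bs.indSign ε D := by
    rw [hg, show (((μ + t : ℝ)) : 𝕜) = ((μ : ℝ) : 𝕜) + ((t : ℝ) : 𝕜) by push_cast; ring,
      add_smul]
    abel
  rwa [h2] at h

end QBasisAux
namespace QBasisAux
open Finset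
variable {𝕜 : Type*} [RCLike 𝕜] {X : Type*} [AddCommGroup X] [Module 𝕜 X] (bs : QBasis 𝕜 X)

lemma N_sub_le {c : ℝ} (hN : ∀ f g : X, bs.N (f + g) ≤ c * (bs.N f + bs.N g)) (f g : X) :
    bs.N (f - g) ≤ c * (bs.N f + bs.N g) := by
  have := hN f (-g)
  rwa [N_neg bs g, ← sub_eq_add_neg] at this

lemma N_indSign_le {c M : ℝ} (hc : 1 ≤ c)
    (hN : ∀ f g : X, bs.N (f + g) ≤ c * (bs.N f + bs.N g))
    (hM : ∀ n, bs.N (bs.e n) ≤ M)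
    {ε : ℕ → 𝕜} {A : Finset ℕ} (hε : QBasis.IsSign ε A) :
    bs.N (bs.indSign ε A) ≤ c ^ A.card * (A.card * M) := by
  calc bs.N (bs.indSign ε A) ≤ c ^ A.card * ∑ j ∈ A, bs.N (ε j • bs.e j) :=
        N_sum_le bs hc hN A _
    _ ≤ c ^ A.card * (A.card * M) := by
        apply mul_le_mul_of_nonneg_left _ (by positivity)
        calc ∑ j ∈ A, bs.N (ε j • bs.e j) = ∑ j ∈ A, bs.N (bs.e j) := by
              refine Finset.sum_congr rfl (fun j hj => ?_)
              rw [bs.N_smul, hε j hj, one_mul]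
          _ ≤ ∑ _j ∈ A, M := Finset.sum_le_sum (fun j _ => hM j)
          _ = A.card * M := by rw [Finset.sum_const, nsmul_eq_mul]

/-- suppression unconditionality -/
lemma suppr {c C κ M : ℝ} (hc : 1 ≤ c)
    (hN : ∀ f g : X, bs.N (f + g) ≤ c * (bs.N f + bs.N g))
    (hC : 0 ≤ C) (hRG : bs.IsRGPCCWith C) (hκ0 : 0 ≤ κ)
    (hκ : ∀ (n : ℕ) (f : X), ‖bs.coord n f‖ ≤ κ * bs.N f)
    (hM0 : 0 ≤ M) (hM : ∀ n, bs.N (bs.e n) ≤ M)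
    (f : X) (D : Finset ℕ) :
    bs.N (f - bs.proj D f) ≤ c * c * C * bs.N f := by
  classical
  have hc0 : (0:ℝ) ≤ c := le_trans zero_le_one hc
  apply le_of_forall_pos_le_add
  intro ε' hε'
  set R : ℝ := c ^ (D.card + 1) * ((D.card + 1) * M) with hR
  have hR0 : 0 ≤ R := by positivity
  set Q : ℝ := c * (c * C * R + M) with hQ
  have hQ0 : 0 ≤ Q := by positivity
  set δ : ℝ := ε' / (Q + 1) with hδdef
  have hδpos : 0 < δ := div_pos hε' (by linarith)
  obtain ⟨k, hkD, hkc⟩ := exists_small_coord bs κ hκ f D hδpos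
  set D' := insert k D with hD'
  have hcard' : D'.card = D.card + 1 := Finset.card_insert_of_notMem hkD
  have hstep : f - bs.proj D f = (f - bs.proj D' f) + bs.coord k f • bs.e k := by
    have hp : bs.proj D' f = bs.coord k f • bs.e k + bs.proj D f := by
      rw [hD', QBasis.proj, Finset.sum_insert hkD]; rfl
    rw [hp]; abel
  set μ' := bs.minCoef f D' with hμ'
  have hμ'0 : 0 ≤ μ' := minCoef_nonneg bs f D'
  have hμ'δ : μ' < δ := lt_of_le_of_lt (minCoef_le bs f (Finset.mem_insert_self k D)) hkc
  have hind : bs.N (bs.indSign (phase bs f) D') ≤ R := by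
    have h := N_indSign_le bs hc hN hM (isSign_phase bs f D')
    rw [hcard'] at h
    rw [hR]
    push_cast at h ⊢
    linarith
  have hH := H' bs hRG hκ0 hκ f D' ⟨k, Finset.mem_insert_self k D⟩
  rw [← hμ'] at hH
  have h1 : bs.N (f - ((μ' : ℝ) : 𝕜) • bs.indSign (phase bs f) D') ≤ c * (bs.N f + δ * R) := by
    calc bs.N (f - ((μ' : ℝ) : 𝕜) • bs.indSign (phase bs f) D')
        ≤ c * (bs.N f + bs.N (((μ' : ℝ) : 𝕜) • bs.indSign (phase bs f) D')) :=
          N_sub_le bs hN _ _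
      _ ≤ c * (bs.N f + δ * R) := by
          apply mul_le_mul_of_nonneg_left _ hc0
          rw [N_smulR bs μ' hμ'0]
          have : μ' * bs.N (bs.indSign (phase bs f) D') ≤ δ * R :=
            mul_le_mul hμ'δ.le hind (bs.N_nonneg _) (le_of_lt hδpos)
          linarith
  have h2 : bs.N (f - bs.proj D' f) ≤ C * (c * (bs.N f + δ * R)) :=
    le_trans hH (mul_le_mul_of_nonneg_left h1 hC)
  have h3 : bs.N (bs.coord k f • bs.e k) ≤ δ * M := by
    rw [bs.N_smul]
    exact mul_le_mul hkc.le (hM k) (bs.N_nonneg _) (le_of_lt hδpos)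
  have h4 : bs.N (f - bs.proj D f) ≤
      c * (C * (c * (bs.N f + δ * R)) + δ * M) := by
    rw [hstep]
    calc bs.N ((f - bs.proj D' f) + bs.coord k f • bs.e k)
        ≤ c * (bs.N (f - bs.proj D' f) + bs.N (bs.coord k f • bs.e k)) := hN _ _
      _ ≤ c * (C * (c * (bs.N f + δ * R)) + δ * M) := by
          apply mul_le_mul_of_nonneg_left _ hc0
          linarith
  have hδQ : δ * Q ≤ ε' := by
    rw [hδdef]
    rw [div_mul_eq_mul_div, div_le_iff₀ (by linarith : (0:ℝ) < Q + 1)]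
    nlinarith
  calc bs.N (f - bs.proj D f) ≤ c * (C * (c * (bs.N f + δ * R)) + δ * M) := h4
    _ = c * c * C * bs.N f + δ * Q := by rw [hQ]; ring
    _ ≤ c * c * C * bs.N f + ε' := by linarith

lemma projBound {c C κ M : ℝ} (hc : 1 ≤ c)
    (hN : ∀ f g : X, bs.N (f + g) ≤ c * (bs.N f + bs.N g))
    (hC : 0 ≤ C) (hRG : bs.IsRGPCCWith C) (hκ0 : 0 ≤ κ)
    (hκ : ∀ (n : ℕ) (f : X), ‖bs.coord n f‖ ≤ κ * bs.N f)
    (hM0 : 0 ≤ M) (hM : ∀ n, bs.N (bs.e n) ≤ M)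
    (f : X) (D : Finset ℕ) :
    bs.N (bs.proj D f) ≤ c * (1 + c * c * C) * bs.N f := by
  have hc0 : (0:ℝ) ≤ c := le_trans zero_le_one hc
  have h1 : bs.proj D f = f - (f - bs.proj D f) := by abel
  rw [h1]
  calc bs.N (f - (f - bs.proj D f)) ≤ c * (bs.N f + bs.N (f - bs.proj D f)) :=
        N_sub_le bs hN _ _
    _ ≤ c * (bs.N f + c * c * C * bs.N f) := by
        apply mul_le_mul_of_nonneg_left _ hc0
        have := suppr bs hc hN hC hRG hκ0 hκ hM0 hM f D
        linarith
    _ = c * (1 + c * c * C) * bs.N f := by ring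

end QBasisAux
namespace QBasisAux
open Finset
variable {𝕜 : Type*} [RCLike 𝕜] {X : Type*} [AddCommGroup X] [Module 𝕜 X] (bs : QBasis 𝕜 X)

lemma ind_eq_indSign (E : Finset ℕ) : bs.ind E = bs.indSign (fun _ => (1:𝕜)) E := by
  simp [QBasis.ind, QBasis.indSign]

lemma isSign_one (E : Finset ℕ) : QBasis.IsSign (fun _ => (1:𝕜)) E :=
  fun j _ => norm_one

/-- lower bound: the smallest coefficient times an indicator is dominated by the projection -/
lemma smallestCoefBound {C : ℝ} (hRG : bs.IsRGPCCWith C)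
    (g : X) (S E : Finset ℕ) (δ : ℕ → 𝕜) (hS : S.Nonempty) (hdisj : Disjoint S E)
    (hcard : E.card = S.card) (hδ : QBasis.IsSign δ E) :
    bs.minCoef g S * bs.N (bs.indSign δ E) ≤ C * bs.N (bs.proj S g) := by
  classical
  set μ := bs.minCoef g S with hμ
  have hμ0 : 0 ≤ μ := minCoef_nonneg bs g S
  set w := bs.proj S g + ((μ : ℝ) : 𝕜) • bs.indSign δ E with hw
  have hcw : ∀ n, bs.coord n w =
      (if n ∈ S then bs.coord n g else 0) + ((μ : ℝ) : 𝕜) * (if n ∈ E then δ n else 0) := by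
    intro n
    rw [hw, map_add, map_smul, coord_indSign, smul_eq_mul, coord_proj]
  have hcwS : ∀ n ∈ S, bs.coord n w = bs.coord n g := by
    intro n hn
    have hnE : n ∉ E := Finset.disjoint_left.mp hdisj hn
    rw [hcw n, if_pos hn, if_neg hnE, mul_zero, add_zero]
  have hcwE : ∀ n ∈ E, bs.coord n w = ((μ : ℝ) : 𝕜) * δ n := by
    intro n hn
    have hnS : n ∉ S := Finset.disjoint_right.mp hdisj hn
    rw [hcw n, if_neg hnS, if_pos hn, zero_add]
  have hgreedy : bs.IsGreedySet w S := by
    intro n hn m hm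
    rw [hcwS n hn]
    have hnm : μ ≤ ‖bs.coord n g‖ := minCoef_le bs g hn
    by_cases hmE : m ∈ E
    · rw [hcwE m hmE, norm_mul, hδ m hmE, mul_one, RCLike.norm_ofReal, abs_of_nonneg hμ0]
      exact hnm
    · rw [hcw m, if_neg hm, if_neg hmE, mul_zero, add_zero, norm_zero]
      exact norm_nonneg _
  have hminw : bs.minCoef w S = μ := by
    apply le_antisymm
    · obtain ⟨j, hj, hjv⟩ := exists_minCoef bs g hS
      calc bs.minCoef w S ≤ ‖bs.coord j w‖ := minCoef_le bs w hj
        _ = μ := by rw [hcwS j hj, ← hjv]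
    · refine le_minCoef bs w hS (fun j hj => ?_)
      rw [hcwS j hj]
      exact minCoef_le bs g hj
  have hprojw : bs.proj S w = bs.proj S g := by
    rw [QBasis.proj]
    rw [show bs.proj S g = ∑ n ∈ S, bs.coord n g • bs.e n from rfl]
    exact Finset.sum_congr rfl (fun n hn => by rw [hcwS n hn])
  have h := hRG w S E δ hgreedy hcard hδ
  rw [hminw, hprojw] at h
  have h1 : w - bs.proj S g = ((μ : ℝ) : 𝕜) • bs.indSign δ E := by rw [hw]; abel
  have h2 : w - ((μ : ℝ) : 𝕜) • bs.indSign δ E = bs.proj S g := by rw [hw]; abel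
  rw [h1, h2] at h
  rwa [N_smulR bs μ hμ0] at h

/-- any sub-indicator-sum of `S` is dominated by the indicator of a set of the size of `S` -/
lemma subIndBound {c C κ M : ℝ} (hc : 1 ≤ c)
    (hN : ∀ f g : X, bs.N (f + g) ≤ c * (bs.N f + bs.N g))
    (hC : 0 ≤ C) (hRG : bs.IsRGPCCWith C) (hκ0 : 0 ≤ κ)
    (hκ : ∀ (n : ℕ) (f : X), ‖bs.coord n f‖ ≤ κ * bs.N f)
    (hM0 : 0 ≤ M) (hM : ∀ n, bs.N (bs.e n) ≤ M)
    (S'' S E : Finset ℕ) (hsub : S'' ⊆ S) (hdisj : Disjoint S E)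
    (hcard : E.card = S.card) (ε : ℕ → 𝕜) (hε : QBasis.IsSign ε S'') :
    bs.N (bs.indSign ε S'') ≤ (c * (1 + c * c * C)) * C * bs.N (bs.ind E) := by
  classical
  obtain ⟨F, hFcard, hFdisj⟩ := exists_fresh (S.card - S''.card) (S'' ∪ E)
  have hFS'' : Disjoint F S'' := hFdisj.mono_right Finset.subset_union_left
  have hFE : Disjoint F E := hFdisj.mono_right Finset.subset_union_right
  set G := S'' ∪ F with hG
  have hGcard : G.card = S.card := by
    rw [hG, Finset.card_union_of_disjoint hFS''.symm, hFcard]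
    have : S''.card ≤ S.card := Finset.card_le_card hsub
    omega
  have hGE : Disjoint G E := by
    rw [hG, Finset.disjoint_union_left]
    exact ⟨(Finset.disjoint_left.mpr (fun a ha => Finset.disjoint_left.mp hdisj (hsub ha))),
      hFE⟩
  set ε' : ℕ → 𝕜 := fun j => if j ∈ S'' then ε j else 1 with hε'
  have hε'sign : QBasis.IsSign ε' G := by
    intro j hj
    rw [hε']
    by_cases h : j ∈ S''
    · simpa [h] using hε j h
    · simp [h]
  have hkey : bs.indSign ε S'' = bs.proj S'' (bs.indSign ε' G) := by
    rw [QBasis.proj, QBasis.indSign]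
    refine Finset.sum_congr rfl (fun n hn => ?_)
    rw [coord_indSign, if_pos (Finset.mem_union_left _ hn)]
    congr 1
    rw [hε']; simp [hn]
  calc bs.N (bs.indSign ε S'') = bs.N (bs.proj S'' (bs.indSign ε' G)) := by rw [hkey]
    _ ≤ c * (1 + c * c * C) * bs.N (bs.indSign ε' G) :=
        projBound bs hc hN hC hRG hκ0 hκ hM0 hM _ _
    _ ≤ c * (1 + c * c * C) * (C * bs.N (bs.indSign (fun _ => (1:𝕜)) E)) := by
        apply mul_le_mul_of_nonneg_left _ (by positivity)
        exact demS bs hC hRG E G (fun _ => (1:𝕜)) ε' hGE.symm (by rw [hGcard, hcard])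
          (isSign_one (𝕜 := 𝕜) E) hε'sign
    _ = (c * (1 + c * c * C)) * C * bs.N (bs.ind E) := by
        rw [ind_eq_indSign]; ring

end QBasisAux
namespace QBasisAux
open Finset
variable {𝕜 : Type*} [RCLike 𝕜] {X : Type*} [AddCommGroup X] [Module 𝕜 X] (bs : QBasis 𝕜 X)

/-- integer coefficients bound -/
lemma intCoef {c C κ M : ℝ} (hc : 1 ≤ c)
    (hN : ∀ f g : X, bs.N (f + g) ≤ c * (bs.N f + bs.N g))
    (hC : 0 ≤ C) (hRG : bs.IsRGPCCWith C) (hκ0 : 0 ≤ κ)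
    (hκ : ∀ (n : ℕ) (f : X), ‖bs.coord n f‖ ≤ κ * bs.N f)
    (hM0 : 0 ≤ M) (hM : ∀ n, bs.N (bs.e n) ≤ M)
    (S E : Finset ℕ) (hdisj : Disjoint S E) (hcard : E.card = S.card) :
    ∀ (s : ℕ) (d : ℕ → ℕ), (∀ j ∈ S, d j < 2 ^ s) →
      bs.N (∑ j ∈ S, (d j : 𝕜) • bs.e j) ≤
        ((2 * c) ^ s - 1) * (c * ((c * (1 + c * c * C)) * C) * bs.N (bs.ind E)) := by
  classical
  have hc0 : (0:ℝ) ≤ c := le_trans zero_le_one hc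
  set K6 : ℝ := (c * (1 + c * c * C)) * C with hK6
  have hK60 : 0 ≤ K6 := by positivity
  set NE : ℝ := bs.N (bs.ind E) with hNE
  have hNE0 : 0 ≤ NE := bs.N_nonneg _
  intro s
  induction s with
  | zero =>
    intro d hd
    have : ∀ j ∈ S, (d j : 𝕜) • bs.e j = 0 := by
      intro j hj
      have : d j = 0 := by have := hd j hj; omega
      simp [this]
    rw [Finset.sum_congr rfl this, Finset.sum_const, smul_zero]
    simp [N_zero bs]
  | succ s ih =>
    intro d hd
    set q : ℕ → ℕ := fun j => d j / 2 with hq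
    set Sb : Finset ℕ := S.filter (fun j => d j % 2 = 1) with hSb
    have hident : ∑ j ∈ S, (d j : 𝕜) • bs.e j =
        (2 : 𝕜) • (∑ j ∈ S, (q j : 𝕜) • bs.e j) + bs.indSign (fun _ => (1:𝕜)) Sb := by
      rw [QBasis.indSign, hSb, Finset.sum_filter, Finset.smul_sum, ← Finset.sum_add_distrib]
      refine Finset.sum_congr rfl (fun j hj => ?_)
      have hdj : d j = 2 * q j + d j % 2 := by simp only [hq]; omega
      rw [smul_smul]
      rcases Nat.mod_two_eq_zero_or_one (d j) with h | h
      · rw [if_neg (by omega), add_zero]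
        have : (d j : 𝕜) = 2 * (q j : 𝕜) := by
          rw [hdj, h, add_zero]; push_cast; ring
        rw [this]
      · rw [if_pos h]
        have : (d j : 𝕜) = 2 * (q j : 𝕜) + 1 := by
          rw [hdj, h]; push_cast; ring
        rw [this, add_smul, one_smul]
    have hq2 : ∀ j ∈ S, q j < 2 ^ s := by
      intro j hj
      have h := hd j hj
      have hp : 2 ^ (s+1) = 2 * 2 ^ s := by rw [pow_succ]; ring
      show d j / 2 < 2 ^ s
      omega
    have h1 : bs.N ((2 : 𝕜) • (∑ j ∈ S, (q j : 𝕜) • bs.e j)) ≤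
        2 * (((2 * c) ^ s - 1) * (c * K6 * NE)) := by
      rw [bs.N_smul]
      have : ‖(2 : 𝕜)‖ = 2 := by
        rw [show (2:𝕜) = ((2:ℝ) : 𝕜) by push_cast; ring, RCLike.norm_ofReal]
        norm_num
      rw [this]
      exact mul_le_mul_of_nonneg_left (ih q hq2) (by norm_num)
    have h2 : bs.N (bs.indSign (fun _ => (1:𝕜)) Sb) ≤ K6 * NE := by
      rw [hK6, hNE]
      exact subIndBound bs hc hN hC hRG hκ0 hκ hM0 hM Sb S E (Finset.filter_subset _ _)
        hdisj hcard _ (isSign_one (𝕜 := 𝕜) Sb)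
    have hpow1 : (1:ℝ) ≤ (2*c) ^ s := one_le_pow₀ (by linarith)
    calc bs.N (∑ j ∈ S, (d j : 𝕜) • bs.e j)
        ≤ c * (bs.N ((2 : 𝕜) • (∑ j ∈ S, (q j : 𝕜) • bs.e j)) +
            bs.N (bs.indSign (fun _ => (1:𝕜)) Sb)) := by rw [hident]; exact hN _ _
      _ ≤ c * (2 * (((2 * c) ^ s - 1) * (c * K6 * NE)) + K6 * NE) := by
          apply mul_le_mul_of_nonneg_left _ hc0
          linarith
      _ ≤ ((2 * c) ^ (s+1) - 1) * (c * K6 * NE) := by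
          have hKN : 0 ≤ K6 * NE := mul_nonneg hK60 hNE0
          have hpows : (2*c)^(s+1) = 2*c*(2*c)^s := by ring
          nlinarith [mul_nonneg hKN (sub_nonneg.mpr hpow1), mul_nonneg hc0 hKN]

end QBasisAux
namespace QBasisAux
open Finset
variable {𝕜 : Type*} [RCLike 𝕜] {X : Type*} [AddCommGroup X] [Module 𝕜 X] (bs : QBasis 𝕜 X)

/-- bound for coefficients in `[0,1]` -/
lemma unitCoef {c C κ M : ℝ} (hc : 1 ≤ c)
    (hN : ∀ f g : X, bs.N (f + g) ≤ c * (bs.N f + bs.N g))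
    (hC : 0 ≤ C) (hRG : bs.IsRGPCCWith C) (hκ0 : 0 ≤ κ)
    (hκ : ∀ (n : ℕ) (f : X), ‖bs.coord n f‖ ≤ κ * bs.N f)
    (hM0 : 0 ≤ M) (hM : ∀ n, bs.N (bs.e n) ≤ M)
    (S E : Finset ℕ) (hdisj : Disjoint S E) (hcard : E.card = S.card)
    (s : ℕ) (hs : 2 * c ≤ 2 ^ s)
    (t : ℕ → ℝ) (ht0 : ∀ j ∈ S, 0 ≤ t j) (ht1 : ∀ j ∈ S, t j ≤ 1) :
    bs.N (∑ j ∈ S, ((t j : ℝ) : 𝕜) • bs.e j) ≤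
      ((2 * c) ^ s - 1) * (c * ((c * (1 + c * c * C)) * C) * bs.N (bs.ind E)) := by
  classical
  have hc0 : (0:ℝ) < c := lt_of_lt_of_le one_pos hc
  set K6 : ℝ := (c * (1 + c * c * C)) * C with hK6
  have hK60 : 0 ≤ K6 := by positivity
  set NE : ℝ := bs.N (bs.ind E) with hNE
  have hNE0 : 0 ≤ NE := bs.N_nonneg _
  set G : ℝ := ((2 * c) ^ s - 1) * (c * K6 * NE) with hG
  have hG0 : 0 ≤ G := by
    have hpow1 : (1:ℝ) ≤ (2*c) ^ s := one_le_pow₀ (by linarith)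
    have : (0:ℝ) ≤ c * K6 * NE := by positivity
    nlinarith
  set m : ℝ := 2 ^ s with hm
  have hm0 : (0:ℝ) < m := by positivity
  have hm2c : 2 * c ≤ m := hs
  set r : ℝ := c / m with hr
  have hr0 : 0 ≤ r := by positivity
  have hr12 : r ≤ 1 / 2 := by
    rw [hr, div_le_div_iff₀ hm0 (by norm_num)]
    linarith
  set X0 : ℝ := c ^ S.card * (S.card * M) with hX0
  have hX00 : 0 ≤ X0 := by positivity
  have base : ∀ u : ℕ → ℝ, (∀ j ∈ S, 0 ≤ u j) → (∀ j ∈ S, u j ≤ 1) →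
      bs.N (∑ j ∈ S, ((u j : ℝ) : 𝕜) • bs.e j) ≤ X0 := by
    intro u hu0 hu1
    calc bs.N (∑ j ∈ S, ((u j : ℝ) : 𝕜) • bs.e j)
        ≤ c ^ S.card * ∑ j ∈ S, bs.N (((u j : ℝ) : 𝕜) • bs.e j) :=
          N_sum_le bs hc hN S _
      _ ≤ c ^ S.card * (S.card * M) := by
          apply mul_le_mul_of_nonneg_left _ (by positivity)
          calc ∑ j ∈ S, bs.N (((u j : ℝ) : 𝕜) • bs.e j)
              ≤ ∑ _j ∈ S, M := by
                refine Finset.sum_le_sum (fun j hj => ?_)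
                rw [N_smulR bs (u j) (hu0 j hj)]
                calc u j * bs.N (bs.e j) ≤ 1 * M :=
                      mul_le_mul (hu1 j hj) (hM j) (bs.N_nonneg _) zero_le_one
                  _ = M := one_mul M
            _ = S.card * M := by rw [Finset.sum_const, nsmul_eq_mul]
  have main : ∀ n : ℕ, ∀ u : ℕ → ℝ, (∀ j ∈ S, 0 ≤ u j) → (∀ j ∈ S, u j ≤ 1) →
      bs.N (∑ j ∈ S, ((u j : ℝ) : 𝕜) • bs.e j) ≤ G + r ^ n * X0 := by
    intro n
    induction n with
    | zero =>
      intro u hu0 hu1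
      have := base u hu0 hu1
      simpa using (le_trans this (by linarith))
    | succ n ih =>
      intro u hu0 hu1
      set d : ℕ → ℕ := fun j => min (Nat.floor (m * u j)) (2 ^ s - 1) with hd
      set u' : ℕ → ℝ := fun j => m * u j - d j with hu'
      have hd_le : ∀ j ∈ S, (d j : ℝ) ≤ m * u j := by
        intro j hj
        calc (d j : ℝ) ≤ (Nat.floor (m * u j) : ℝ) := by
              exact_mod_cast min_le_left _ _
          _ ≤ m * u j := Nat.floor_le (mul_nonneg hm0.le (hu0 j hj))
      have hdlt : ∀ j ∈ S, d j < 2 ^ s := by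
        intro j hj
        have h1 : (1:ℕ) ≤ 2 ^ s := Nat.one_le_two_pow
        have := min_le_right (Nat.floor (m * u j)) (2 ^ s - 1)
        show min (Nat.floor (m * u j)) (2 ^ s - 1) < 2 ^ s
        omega
      have hu'0 : ∀ j ∈ S, 0 ≤ u' j := by
        intro j hj
        have := hd_le j hj
        show 0 ≤ m * u j - (d j : ℝ)
        linarith
      have hu'1 : ∀ j ∈ S, u' j ≤ 1 := by
        intro j hj
        show m * u j - (d j : ℝ) ≤ 1
        rcases le_or_gt (Nat.floor (m * u j)) (2 ^ s - 1) with hle | hlt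
        · have hdj : d j = Nat.floor (m * u j) := min_eq_left hle
          have := Nat.lt_floor_add_one (m * u j)
          rw [hdj]
          push_cast
          linarith
        · have hdj : d j = 2 ^ s - 1 := min_eq_right (le_of_lt hlt)
          have h1 : (1:ℕ) ≤ 2 ^ s := Nat.one_le_two_pow
          have hcast : ((2 ^ s - 1 : ℕ) : ℝ) = m - 1 := by
            rw [hm]
            push_cast [h1]
            ring
          rw [hdj, hcast]
          have : m * u j ≤ m * 1 := mul_le_mul_of_nonneg_left (hu1 j hj) hm0.le
          linarith
      have hident : ∑ j ∈ S, ((u j : ℝ) : 𝕜) • bs.e j =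
          ((m⁻¹ : ℝ) : 𝕜) • ((∑ j ∈ S, (d j : 𝕜) • bs.e j) +
            ∑ j ∈ S, ((u' j : ℝ) : 𝕜) • bs.e j) := by
        rw [smul_add, Finset.smul_sum, Finset.smul_sum, ← Finset.sum_add_distrib]
        refine Finset.sum_congr rfl (fun j hj => ?_)
        rw [smul_smul, smul_smul, ← add_smul]
        congr 1
        have hreal : (u j : ℝ) = m⁻¹ * (d j : ℝ) + m⁻¹ * u' j := by
          show (u j : ℝ) = m⁻¹ * (d j : ℝ) + m⁻¹ * (m * u j - (d j:ℝ))
          field_simp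
          ring
        calc ((u j : ℝ) : 𝕜) = ((m⁻¹ * (d j : ℝ) + m⁻¹ * u' j : ℝ) : 𝕜) := by
              exact_mod_cast congrArg (fun x : ℝ => ((x : ℝ) : 𝕜)) hreal
          _ = ((m⁻¹ : ℝ) : 𝕜) * ((d j : ℕ) : 𝕜) + ((m⁻¹ : ℝ) : 𝕜) * ((u' j : ℝ) : 𝕜) := by
              push_cast
              ring
      have hN1 : bs.N (∑ j ∈ S, (d j : 𝕜) • bs.e j) ≤ G := by
        rw [hG, hK6, hNE]
        exact intCoef bs hc hN hC hRG hκ0 hκ hM0 hM S E hdisj hcard s d hdlt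
      have hN2 : bs.N (∑ j ∈ S, ((u' j : ℝ) : 𝕜) • bs.e j) ≤ G + r ^ n * X0 :=
        ih u' hu'0 hu'1
      have hminv0 : (0:ℝ) ≤ m⁻¹ := by positivity
      calc bs.N (∑ j ∈ S, ((u j : ℝ) : 𝕜) • bs.e j)
          = m⁻¹ * bs.N ((∑ j ∈ S, (d j : 𝕜) • bs.e j) +
              ∑ j ∈ S, ((u' j : ℝ) : 𝕜) • bs.e j) := by
            rw [hident, N_smulR bs _ hminv0]
        _ ≤ m⁻¹ * (c * (bs.N (∑ j ∈ S, (d j : 𝕜) • bs.e j) +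
              bs.N (∑ j ∈ S, ((u' j : ℝ) : 𝕜) • bs.e j))) :=
            mul_le_mul_of_nonneg_left (hN _ _) hminv0
        _ ≤ m⁻¹ * (c * (G + (G + r ^ n * X0))) := by
            apply mul_le_mul_of_nonneg_left _ hminv0
            apply mul_le_mul_of_nonneg_left _ hc0.le
            linarith
        _ = r * (2 * G) + r ^ (n+1) * X0 := by
            rw [hr]
            field_simp
            linear_combination (-(c * c ^ n * m⁻¹ ^ n * X0)) * (mul_inv_cancel₀ hm0.ne')
        _ ≤ G + r ^ (n+1) * X0 := by
            have : r * (2 * G) ≤ (1/2) * (2 * G) :=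
              mul_le_mul_of_nonneg_right hr12 (by linarith)
            linarith
  apply le_of_forall_pos_le_add
  intro ε hε
  obtain ⟨n, hn⟩ := exists_pow_lt_of_lt_one (div_pos hε (by linarith : (0:ℝ) < X0 + 1))
    (by norm_num : (1:ℝ)/2 < 1)
  have hrn : r ^ n ≤ (1/2) ^ n := pow_le_pow_left₀ hr0 hr12 n
  have h := main n t ht0 ht1
  have hfin : r ^ n * X0 ≤ ε := by
    have h1 : r ^ n * X0 ≤ (1/2) ^ n * X0 := mul_le_mul_of_nonneg_right hrn hX00
    have h2 : (1/2:ℝ) ^ n * X0 ≤ (ε / (X0 + 1)) * X0 := by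
      apply mul_le_mul_of_nonneg_right (le_of_lt hn) hX00
    have h3 : (ε / (X0 + 1)) * X0 ≤ ε := by
      rw [div_mul_eq_mul_div, div_le_iff₀ (by linarith : (0:ℝ) < X0 + 1)]
      nlinarith
    linarith
  linarith

end QBasisAux
namespace QBasisAux
open Finset
variable {𝕜 : Type*} [RCLike 𝕜] {X : Type*} [AddCommGroup X] [Module 𝕜 X] (bs : QBasis 𝕜 X)

lemma norm_I_le_one : ‖(RCLike.I : 𝕜)‖ ≤ 1 := by
  rcases @RCLike.I_mul_I_ax 𝕜 _ with h | h
  · rw [h, norm_zero]; norm_num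
  · have h1 : ‖(RCLike.I : 𝕜)‖ * ‖(RCLike.I : 𝕜)‖ = 1 := by
      rw [← norm_mul, h, norm_neg, norm_one]
    nlinarith [norm_nonneg (RCLike.I : 𝕜)]

/-- bound for arbitrary coefficients of modulus at most `α` -/
lemma boundedCoef {c C κ M : ℝ} (hc : 1 ≤ c)
    (hN : ∀ f g : X, bs.N (f + g) ≤ c * (bs.N f + bs.N g))
    (hC : 0 ≤ C) (hRG : bs.IsRGPCCWith C) (hκ0 : 0 ≤ κ)
    (hκ : ∀ (n : ℕ) (f : X), ‖bs.coord n f‖ ≤ κ * bs.N f)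
    (hM0 : 0 ≤ M) (hM : ∀ n, bs.N (bs.e n) ≤ M)
    (S E : Finset ℕ) (hdisj : Disjoint S E) (hcard : E.card = S.card)
    (s : ℕ) (hs : 2 * c ≤ 2 ^ s)
    (α : ℝ) (hα : 0 ≤ α) (b : ℕ → 𝕜) (hb : ∀ j ∈ S, ‖b j‖ ≤ α) :
    bs.N (∑ j ∈ S, b j • bs.e j) ≤
      (4 * c * c * (((2 * c) ^ s - 1) * (c * ((c * (1 + c * c * C)) * C)))) *
        (α * bs.N (bs.ind E)) := by
  classical
  have hc0 : (0:ℝ) < c := lt_of_lt_of_le one_pos hc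
  set K6 : ℝ := (c * (1 + c * c * C)) * C with hK6
  have hK60 : 0 ≤ K6 := by positivity
  set NE : ℝ := bs.N (bs.ind E) with hNE
  have hNE0 : 0 ≤ NE := bs.N_nonneg _
  set Gc : ℝ := ((2 * c) ^ s - 1) * (c * K6) with hGc
  have hpow1 : (1:ℝ) ≤ (2*c) ^ s := one_le_pow₀ (by linarith)
  have hGc0 : 0 ≤ Gc := by
    have : (0:ℝ) ≤ c * K6 := by positivity
    nlinarith
  rcases eq_or_lt_of_le hα with rfl | hαpos
  · have hz : ∀ j ∈ S, b j • bs.e j = 0 := by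
      intro j hj
      have : ‖b j‖ ≤ 0 := hb j hj
      have : b j = 0 := norm_le_zero_iff.mp this
      simp [this]
    rw [Finset.sum_congr rfl hz, Finset.sum_const, smul_zero]
    simp [N_zero bs]
  · set t1 : ℕ → ℝ := fun j => max (RCLike.re (b j)) 0 / α with ht1
    set t2 : ℕ → ℝ := fun j => max (-(RCLike.re (b j))) 0 / α with ht2
    set t3 : ℕ → ℝ := fun j => max (RCLike.im (b j)) 0 / α with ht3
    set t4 : ℕ → ℝ := fun j => max (-(RCLike.im (b j))) 0 / α with ht4
    have hre : ∀ j, |RCLike.re (b j)| ≤ ‖b j‖ := fun j => RCLike.abs_re_le_norm (b j)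
    have him : ∀ j, |RCLike.im (b j)| ≤ ‖b j‖ := fun j => RCLike.abs_im_le_norm (b j)
    have hbounds : ∀ (t : ℕ → ℝ), (t = t1 ∨ t = t2 ∨ t = t3 ∨ t = t4) →
        (∀ j ∈ S, 0 ≤ t j) ∧ (∀ j ∈ S, t j ≤ 1) := by
      intro t ht
      constructor
      · intro j hj
        rcases ht with rfl | rfl | rfl | rfl <;>
          exact div_nonneg (le_max_right _ _) hα
      · intro j hj
        have key : ∀ x : ℝ, |x| ≤ α → max x 0 / α ≤ 1 := by
          intro x hx
          rw [div_le_one hαpos, max_le_iff]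
          exact ⟨(abs_le.mp hx).2, hα⟩
        have h1 : |RCLike.re (b j)| ≤ α := le_trans (hre j) (hb j hj)
        have h2 : |RCLike.im (b j)| ≤ α := le_trans (him j) (hb j hj)
        have h1' : |(-(RCLike.re (b j)))| ≤ α := by rwa [abs_neg]
        have h2' : |(-(RCLike.im (b j)))| ≤ α := by rwa [abs_neg]
        rcases ht with rfl | rfl | rfl | rfl
        · exact key _ h1
        · exact key _ h1'
        · exact key _ h2
        · exact key _ h2' 
    have hscal : ∀ j ∈ S, b j =
        ((α : ℝ) : 𝕜) * ((((t1 j : ℝ)) : 𝕜) - ((t2 j : ℝ) : 𝕜) +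
          (((t3 j : ℝ) : 𝕜) - ((t4 j : ℝ) : 𝕜)) * RCLike.I) := by
      intro j hj
      have hre_eq : α * (t1 j - t2 j) = RCLike.re (b j) := by
        show α * (max (RCLike.re (b j)) 0 / α - max (-(RCLike.re (b j))) 0 / α) = _
        field_simp
        rw [max_zero_sub_max_neg_zero_eq_self]
      have him_eq : α * (t3 j - t4 j) = RCLike.im (b j) := by
        show α * (max (RCLike.im (b j)) 0 / α - max (-(RCLike.im (b j))) 0 / α) = _
        field_simp
        rw [max_zero_sub_max_neg_zero_eq_self]
      have := RCLike.re_add_im (b j)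
      rw [← this, ← hre_eq, ← him_eq]
      push_cast
      ring
    have hvec : ∑ j ∈ S, b j • bs.e j =
        ((α : ℝ) : 𝕜) • ((∑ j ∈ S, ((t1 j : ℝ) : 𝕜) • bs.e j) -
          (∑ j ∈ S, ((t2 j : ℝ) : 𝕜) • bs.e j) +
          (RCLike.I : 𝕜) • ((∑ j ∈ S, ((t3 j : ℝ) : 𝕜) • bs.e j) -
            (∑ j ∈ S, ((t4 j : ℝ) : 𝕜) • bs.e j))) := by
      simp only [smul_sub, smul_add, Finset.smul_sum, smul_smul]
      rw [← Finset.sum_sub_distrib, ← Finset.sum_sub_distrib, ← Finset.sum_add_distrib]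
      refine Finset.sum_congr rfl (fun j hj => ?_)
      rw [hscal j hj, ← sub_smul, ← sub_smul, ← add_smul]
      congr 1
      ring
    have hu : ∀ (t : ℕ → ℝ), (t = t1 ∨ t = t2 ∨ t = t3 ∨ t = t4) →
        bs.N (∑ j ∈ S, ((t j : ℝ) : 𝕜) • bs.e j) ≤ Gc * NE := by
      intro t ht
      obtain ⟨h0, h1⟩ := hbounds t ht
      have := unitCoef bs hc hN hC hRG hκ0 hκ hM0 hM S E hdisj hcard s hs t h0 h1
      calc bs.N (∑ j ∈ S, ((t j : ℝ) : 𝕜) • bs.e j)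
          ≤ ((2 * c) ^ s - 1) * (c * ((c * (1 + c * c * C)) * C) * bs.N (bs.ind E)) :=
            this
        _ = Gc * NE := by rw [hGc, hK6, hNE]; ring
    have hu1 := hu t1 (Or.inl rfl)
    have hu2 := hu t2 (Or.inr (Or.inl rfl))
    have hu3 := hu t3 (Or.inr (Or.inr (Or.inl rfl)))
    have hu4 := hu t4 (Or.inr (Or.inr (Or.inr rfl)))
    set u1 := ∑ j ∈ S, ((t1 j : ℝ) : 𝕜) • bs.e j
    set u2 := ∑ j ∈ S, ((t2 j : ℝ) : 𝕜) • bs.e j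
    set u3 := ∑ j ∈ S, ((t3 j : ℝ) : 𝕜) • bs.e j
    set u4 := ∑ j ∈ S, ((t4 j : ℝ) : 𝕜) • bs.e j
    have hI : bs.N ((RCLike.I : 𝕜) • (u3 - u4)) ≤ bs.N (u3 - u4) := by
      rw [bs.N_smul]
      calc ‖(RCLike.I : 𝕜)‖ * bs.N (u3 - u4) ≤ 1 * bs.N (u3 - u4) :=
            mul_le_mul_of_nonneg_right (norm_I_le_one (𝕜 := 𝕜)) (bs.N_nonneg _)
        _ = bs.N (u3 - u4) := one_mul _
    have h34 : bs.N (u3 - u4) ≤ c * (Gc * NE + Gc * NE) := by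
      calc bs.N (u3 - u4) ≤ c * (bs.N u3 + bs.N u4) := N_sub_le bs hN _ _
        _ ≤ c * (Gc * NE + Gc * NE) := by
            apply mul_le_mul_of_nonneg_left _ hc0.le
            linarith
    have h12 : bs.N (u1 - u2) ≤ c * (Gc * NE + Gc * NE) := by
      calc bs.N (u1 - u2) ≤ c * (bs.N u1 + bs.N u2) := N_sub_le bs hN _ _
        _ ≤ c * (Gc * NE + Gc * NE) := by
            apply mul_le_mul_of_nonneg_left _ hc0.le
            linarith
    calc bs.N (∑ j ∈ S, b j • bs.e j)
        = α * bs.N (u1 - u2 + (RCLike.I : 𝕜) • (u3 - u4)) := by rw [hvec, N_smulR bs α hα]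
      _ ≤ α * (c * (bs.N (u1 - u2) + bs.N ((RCLike.I : 𝕜) • (u3 - u4)))) :=
          mul_le_mul_of_nonneg_left (hN _ _) hα
      _ ≤ α * (c * (c * (Gc * NE + Gc * NE) + c * (Gc * NE + Gc * NE))) := by
          apply mul_le_mul_of_nonneg_left _ hα
          apply mul_le_mul_of_nonneg_left _ hc0.le
          linarith
      _ = (4 * c * c * (((2 * c) ^ s - 1) * (c * ((c * (1 + c * c * C)) * C)))) *
            (α * bs.N (bs.ind E)) := by
          rw [← hNE, ← hK6, ← hGc]
          ring

end QBasisAux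
/-- A basis of a quasi-Banach space over `ℝ` or `ℂ` is greedy if and only if
it is relaxed greedy for polynomials with constant coefficients (RGPCC). -/
theorem greedy_iff_RGPCC {𝕜 : Type*} [RCLike 𝕜] {X : Type*} [AddCommGroup X] [Module 𝕜 X]
    (bs : QBasis 𝕜 X) :
    (∃ C : ℝ, 0 < C ∧ bs.IsGreedyWith C) ↔ (∃ C : ℝ, 0 < C ∧ bs.IsRGPCCWith C) := by
  classical
  open QBasisAux in
  constructor
  · rintro ⟨C, hC, hG⟩
    refine ⟨C, hC, ?_⟩
    intro f A B ε hA hcard hsign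
    have h := hG f A B (fun j => ((bs.minCoef f A : ℝ) : 𝕜) * ε j) hA (le_of_eq hcard)
    have hz : (∑ j ∈ B, (((bs.minCoef f A : ℝ) : 𝕜) * ε j) • bs.e j) =
        ((bs.minCoef f A : ℝ) : 𝕜) • bs.indSign ε B := by
      rw [QBasis.indSign, Finset.smul_sum]
      exact Finset.sum_congr rfl (fun j _ => by rw [smul_smul])
    rwa [hz] at h
  · rintro ⟨C, hC, hRG⟩
    obtain ⟨c, hc, hN⟩ := bs.quasi_triangle
    have hc0 : (0:ℝ) < c := lt_of_lt_of_le one_pos hc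
    obtain ⟨M0, hM0'⟩ := bs.e_bdd
    set M : ℝ := max M0 0 with hMdef
    have hM0 : 0 ≤ M := le_max_right _ _
    have hM : ∀ n, bs.N (bs.e n) ≤ M := fun n => le_trans (hM0' n) (le_max_left _ _)
    obtain ⟨κ0, hκ0'⟩ := bs.coord_bdd
    set κ : ℝ := max κ0 0 with hκdef
    have hκ0 : 0 ≤ κ := le_max_right _ _
    have hκ : ∀ (n : ℕ) (f : X), ‖bs.coord n f‖ ≤ κ * bs.N f := fun n f =>
      le_trans (hκ0' n f)
        (mul_le_mul_of_nonneg_right (le_max_left _ _) (bs.N_nonneg f))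
    obtain ⟨s, hs'⟩ := pow_unbounded_of_one_lt (2 * c) (one_lt_two (α := ℝ))
    have hs : 2 * c ≤ 2 ^ s := le_of_lt hs'
    set Ku : ℝ := c * c * C with hKu
    set Kp : ℝ := c * (1 + c * c * C) with hKp
    set K7 : ℝ := 4 * c * c * (((2 * c) ^ s - 1) * (c * ((c * (1 + c * c * C)) * C)))
      with hK7
    have hpow1 : (1:ℝ) ≤ (2*c) ^ s := one_le_pow₀ (by linarith)
    have hKu0 : 0 ≤ Ku := by positivity
    have hKp0 : 0 ≤ Kp := by positivity
    have hK70 : 0 ≤ K7 := by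
      have : (0:ℝ) ≤ 4 * c * c * (c * ((c * (1 + c * c * C)) * C)) := by positivity
      nlinarith
    set C' : ℝ := c * (Ku + K7 * C * Kp) + 1 with hC'
    have hC'0 : 0 < C' := by positivity
    refine ⟨C', hC'0, ?_⟩
    intro f A B a hA hBA
    set z : X := ∑ j ∈ B, a j • bs.e j with hzdef
    set g : X := f - z with hgdef
    have hNg0 : 0 ≤ bs.N g := bs.N_nonneg g
    -- the decomposition
    have h1 : bs.proj (A ∪ B) z = z := by
      have e1 : bs.proj (A ∪ B) z = ∑ n ∈ A ∪ B, (if n ∈ B then a n • bs.e n else 0) := by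
        rw [QBasis.proj]
        refine Finset.sum_congr rfl (fun n _ => ?_)
        rw [hzdef, coord_sum]
        by_cases h : n ∈ B <;> simp [h]
      rw [e1, Finset.sum_ite_mem, Finset.union_inter_cancel_right]
    have h2 : bs.proj (A ∪ B) f = bs.proj A f + bs.proj (B \ A) f := by
      rw [QBasis.proj, QBasis.proj, QBasis.proj, ← Finset.sum_union Finset.disjoint_sdiff,
        Finset.union_sdiff_self_eq_union]
    have hdecomp : f - bs.proj A f = (g - bs.proj (A ∪ B) g) + bs.proj (B \ A) f := by
      rw [hgdef, proj_sub, h1, h2]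
      abel
    have hU : bs.N (g - bs.proj (A ∪ B) g) ≤ Ku * bs.N g := by
      rw [hKu]
      exact suppr bs hc hN hC.le hRG hκ0 hκ hM0 hM g (A ∪ B)
    -- the projection onto B \ A
    have hPBA : bs.N (bs.proj (B \ A) f) ≤ K7 * C * Kp * bs.N g := by
      rcases (B \ A).eq_empty_or_nonempty with hBA' | hBA'
      · rw [hBA', QBasis.proj, Finset.sum_empty, N_zero bs]
        positivity
      · set S' : Finset ℕ := B \ A with hS'
        have hr2 : S'.card ≤ (A \ B).card := by
          show (B \ A).card ≤ (A \ B).card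
          have e1 := Finset.card_sdiff_add_card_inter A B
          have e2 := Finset.card_sdiff_add_card_inter B A
          rw [Finset.inter_comm] at e2
          omega
        obtain ⟨S, hSsub, hScard⟩ := Finset.exists_subset_card_eq hr2
        have hSne : S.Nonempty := by
          rw [← Finset.card_pos, hScard, Finset.card_pos]
          exact hBA'
        have hAne : A.Nonempty := by
          obtain ⟨x, hx⟩ := hSne
          exact ⟨x, (Finset.mem_sdiff.mp (hSsub hx)).1⟩
        obtain ⟨E, hEcard, hEdisj⟩ := exists_fresh S'.card (S ∪ S')
        have hES : Disjoint S E := (hEdisj.mono_right Finset.subset_union_left).symm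
        have hES' : Disjoint S' E := (hEdisj.mono_right Finset.subset_union_right).symm
        set α : ℝ := bs.minCoef f A with hα
        have hα0 : 0 ≤ α := minCoef_nonneg bs f A
        have hb : ∀ j ∈ S', ‖bs.coord j f‖ ≤ α := by
          intro j hj
          have hjA : j ∉ A := (Finset.mem_sdiff.mp hj).2
          exact le_minCoef bs f hAne (fun n hn => hA n hn j hjA)
        have step1 : bs.N (bs.proj S' f) ≤ K7 * (α * bs.N (bs.ind E)) := by
          rw [hK7]
          exact boundedCoef bs hc hN hC.le hRG hκ0 hκ hM0 hM S' E hES' hEcard s hs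
            α hα0 (fun j => bs.coord j f) hb
        have hcoords : ∀ j ∈ S, bs.coord j g = bs.coord j f := by
          intro j hj
          have hjB : j ∉ B := (Finset.mem_sdiff.mp (hSsub hj)).2
          rw [hgdef, map_sub, hzdef, coord_sum, if_neg hjB, sub_zero]
        have hαmin : α ≤ bs.minCoef g S := by
          refine le_minCoef bs g hSne (fun j hj => ?_)
          rw [hcoords j hj]
          exact minCoef_le bs f (Finset.mem_sdiff.mp (hSsub hj)).1
        have step2 : α * bs.N (bs.ind E) ≤ C * bs.N (bs.proj S g) := by
          have hsc := smallestCoefBound bs hRG g S E (fun _ => (1:𝕜)) hSne hES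
            (by rw [hEcard, hScard]) (isSign_one (𝕜 := 𝕜) E)
          rw [← ind_eq_indSign] at hsc
          calc α * bs.N (bs.ind E) ≤ bs.minCoef g S * bs.N (bs.ind E) :=
                mul_le_mul_of_nonneg_right hαmin (bs.N_nonneg _)
            _ ≤ C * bs.N (bs.proj S g) := hsc
        have step3 : bs.N (bs.proj S g) ≤ Kp * bs.N g := by
          rw [hKp]
          exact projBound bs hc hN hC.le hRG hκ0 hκ hM0 hM g S
        calc bs.N (bs.proj S' f) ≤ K7 * (α * bs.N (bs.ind E)) := step1
          _ ≤ K7 * (C * bs.N (bs.proj S g)) :=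
              mul_le_mul_of_nonneg_left step2 hK70
          _ ≤ K7 * (C * (Kp * bs.N g)) := by
              apply mul_le_mul_of_nonneg_left _ hK70
              exact mul_le_mul_of_nonneg_left step3 hC.le
          _ = K7 * C * Kp * bs.N g := by ring
    calc bs.N (f - bs.proj A f)
        = bs.N ((g - bs.proj (A ∪ B) g) + bs.proj (B \ A) f) := by rw [hdecomp]
      _ ≤ c * (bs.N (g - bs.proj (A ∪ B) g) + bs.N (bs.proj (B \ A) f)) := hN _ _
      _ ≤ c * (Ku * bs.N g + K7 * C * Kp * bs.N g) := by
          apply mul_le_mul_of_nonneg_left _ hc0.le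
          linarith
      _ = c * (Ku + K7 * C * Kp) * bs.N g := by ring
      _ ≤ C' * bs.N g := by
          apply mul_le_mul_of_nonneg_right _ hNg0
          rw [hC']
          linarith
      _ = C' * bs.N (f - z) := by rw [hgdef]
end
end

section
/- Let 0 < p ≤ 1, let X be a p-Banach space over 𝔽 = ℝ or ℂ, and let 𝒳 be a basis of X that is C_pg-RGPCC. Then 𝒳 is greedy with greedy constant C_g ≤ A_p²·C_pg², where A_p = (2^p − 1)^{−1/p}. -/
open scoped BigOperators

noncomputable section

/-- A basis of a `p`-Banach space over `𝕜` (`𝕜 = ℝ` or `ℂ`), bundled with the `p`-norm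
`N`, the basis vectors `e`, and the biorthogonal functionals `coord`. -/
structure PBasis (𝕜 : Type*) [RCLike 𝕜] (X : Type*) [AddCommGroup X] [Module 𝕜 X]
    (p : ℝ) : Type _ where
  /-- the `p`-norm of the space -/
  N : X → ℝ
  N_nonneg : ∀ f : X, 0 ≤ N f
  N_eq_zero_iff : ∀ f : X, N f = 0 ↔ f = 0
  N_smul : ∀ (t : 𝕜) (f : X), N (t • f) = ‖t‖ * N f
  N_padd : ∀ f g : X, N (f + g) ^ p ≤ N f ^ p + N g ^ p
  /-- completeness with respect to the `p`-norm -/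
  complete : ∀ u : ℕ → X,
      (∀ ε : ℝ, 0 < ε → ∃ n₀ : ℕ, ∀ m n : ℕ, n₀ ≤ m → n₀ ≤ n → N (u m - u n) < ε) →
      ∃ f : X, ∀ ε : ℝ, 0 < ε → ∃ n₀ : ℕ, ∀ n : ℕ, n₀ ≤ n → N (u n - f) < ε
  /-- the basis vectors -/
  e : ℕ → X
  /-- the biorthogonal functionals -/
  coord : ℕ → X →ₗ[𝕜] 𝕜
  biorth : ∀ n m : ℕ, coord n (e m) = if n = m then (1 : 𝕜) else 0
  /-- the closed linear span of the basis vectors is the whole space -/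
  dense_span : ∀ f : X, ∀ ε : ℝ, 0 < ε →
      ∃ g ∈ Submodule.span 𝕜 (Set.range e), N (f - g) < ε
  e_bdd : ∃ c : ℝ, ∀ n : ℕ, N (e n) ≤ c
  coord_bdd : ∃ c : ℝ, ∀ (n : ℕ) (f : X), ‖coord n f‖ ≤ c * N f

namespace PBasis

variable {𝕜 : Type*} [RCLike 𝕜] {X : Type*} [AddCommGroup X] [Module 𝕜 X] {p : ℝ}

/-- The projection `P_A f = ∑_{n ∈ A} x_n^*(f) x_n`. -/
def proj (bs : PBasis 𝕜 X p) (A : Finset ℕ) (f : X) : X :=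
  ∑ n ∈ A, bs.coord n f • bs.e n

/-- The support of `f`. -/
def supp (bs : PBasis 𝕜 X p) (f : X) : Set ℕ := {n | bs.coord n f ≠ 0}

/-- `A` is a greedy set of `f`: `min_{n ∈ A} |x_n^*(f)| ≥ max_{m ∉ A} |x_m^*(f)|`. -/
def IsGreedySet (bs : PBasis 𝕜 X p) (f : X) (A : Finset ℕ) : Prop :=
  ∀ n ∈ A, ∀ m : ℕ, m ∉ A → ‖bs.coord m f‖ ≤ ‖bs.coord n f‖

/-- `𝟙_{ε,A} = ∑_{j ∈ A} ε_j x_j`. -/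
def indSign (bs : PBasis 𝕜 X p) (ε : ℕ → 𝕜) (A : Finset ℕ) : X :=
  ∑ j ∈ A, ε j • bs.e j

/-- `𝟙_A = ∑_{j ∈ A} x_j`. -/
def ind (bs : PBasis 𝕜 X p) (A : Finset ℕ) : X := ∑ j ∈ A, bs.e j

/-- `ε` is a sign on `A`. -/
def IsSign (ε : ℕ → 𝕜) (A : Finset ℕ) : Prop := ∀ j ∈ A, ‖ε j‖ = 1

/-- `min_{n ∈ A} |x_n^*(f)|`. -/
def minCoef (bs : PBasis 𝕜 X p) (f : X) (A : Finset ℕ) : ℝ :=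
  sInf ((fun n => ‖bs.coord n f‖) '' (A : Set ℕ))

/-- `‖f − P_A(f)‖ ≤ C·σ_m(f)` for every greedy set `A` of cardinality `m`. -/
def IsGreedyWith (bs : PBasis 𝕜 X p) (C : ℝ) : Prop :=
  ∀ (f : X) (A B : Finset ℕ) (a : ℕ → 𝕜), bs.IsGreedySet f A → B.card ≤ A.card →
    bs.N (f - bs.proj A f) ≤ C * bs.N (f - ∑ j ∈ B, a j • bs.e j)

/-- `‖f − P_A(f)‖ ≤ C·ρ_m(f)` for every greedy set `A` of cardinality `m`, where
`ρ_m(f) = inf {‖f − α 𝟙_{ε,B}‖ : |B| = m, ε sign}` and `α = min_{n ∈ A} |x_n^*(f)|`. -/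
def IsRGPCCWith (bs : PBasis 𝕜 X p) (C : ℝ) : Prop :=
  ∀ (f : X) (A B : Finset ℕ) (ε : ℕ → 𝕜), bs.IsGreedySet f A → B.card = A.card →
    IsSign ε B →
    bs.N (f - bs.proj A f) ≤ C * bs.N (f - ((bs.minCoef f A : ℝ) : 𝕜) • bs.indSign ε B)

/-- `‖f − P_A(f)‖ ≤ C·ϱ_m(f)` for every greedy set `A` of cardinality `m`, where
`ϱ_m(f) = inf {‖f − α 𝟙_B‖ : |B| = m}` and `α = min_{n ∈ A} |x_n^*(f)|`. -/
def IsURGPCCWith (bs : PBasis 𝕜 X p) (C : ℝ) : Prop :=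
  ∀ (f : X) (A B : Finset ℕ), bs.IsGreedySet f A → B.card = A.card →
    bs.N (f - bs.proj A f) ≤ C * bs.N (f - ((bs.minCoef f A : ℝ) : 𝕜) • bs.ind B)

/-- `K`-unconditionality. -/
def IsUncondWith (bs : PBasis 𝕜 X p) (K : ℝ) : Prop :=
  ∀ (A : Finset ℕ) (f : X), bs.N (bs.proj A f) ≤ K * bs.N f

/-- `C`-quasi-greediness. -/
def IsQuasiGreedyWith (bs : PBasis 𝕜 X p) (C : ℝ) : Prop :=
  ∀ (f : X) (A : Finset ℕ), bs.IsGreedySet f A → bs.N (f - bs.proj A f) ≤ C * bs.N f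

/-- `C`-almost-greediness. -/
def IsAlmostGreedyWith (bs : PBasis 𝕜 X p) (C : ℝ) : Prop :=
  ∀ (f : X) (A B : Finset ℕ), bs.IsGreedySet f A → B.card ≤ A.card →
    bs.N (f - bs.proj A f) ≤ C * bs.N (f - bs.proj B f)

/-- `D`-democracy. -/
def IsDemocraticWith (bs : PBasis 𝕜 X p) (D : ℝ) : Prop :=
  ∀ A B : Finset ℕ, A.card ≤ B.card → bs.N (bs.ind A) ≤ D * bs.N (bs.ind B)

/-- `D`-superdemocracy. -/
def IsSuperdemocraticWith (bs : PBasis 𝕜 X p) (D : ℝ) : Prop :=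
  ∀ (A B : Finset ℕ) (ε η : ℕ → 𝕜), A.card ≤ B.card → IsSign ε A → IsSign η B →
    bs.N (bs.indSign ε A) ≤ D * bs.N (bs.indSign η B)

/-- `A < B`, i.e. every element of `A` is smaller than every element of `B`. -/
def FinsetBefore (A B : Finset ℕ) : Prop := ∀ a ∈ A, ∀ b ∈ B, a < b

open scoped Classical in
/-- `sgn z = z/|z|` (with the convention `sgn 0 = 1`). -/
def sgn (z : 𝕜) : 𝕜 := if z = 0 then 1 else z / ((‖z‖ : ℝ) : 𝕜)

end PBasis

namespace PBasis

variable {𝕜 : Type*} [RCLike 𝕜] {X : Type*} [AddCommGroup X] [Module 𝕜 X] {p : ℝ}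

section Helpers

variable (bs : PBasis 𝕜 X p)

lemma N_zero : bs.N 0 = 0 := (bs.N_eq_zero_iff 0).2 rfl

lemma N_neg (x : X) : bs.N (-x) = bs.N x := by
  have h := bs.N_smul (-1 : 𝕜) x
  simpa using h

lemma N_sum_le (hp : 0 < p) {ι : Type*} (s : Finset ι) (u : ι → X) :
    bs.N (∑ i ∈ s, u i) ^ p ≤ ∑ i ∈ s, bs.N (u i) ^ p := by
  classical
  induction s using Finset.cons_induction with
  | empty => simp [bs.N_zero, Real.zero_rpow hp.ne']
  | cons a s ha ih =>
      rw [Finset.sum_cons, Finset.sum_cons]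
      calc bs.N (u a + ∑ i ∈ s, u i) ^ p ≤ bs.N (u a) ^ p + bs.N (∑ i ∈ s, u i) ^ p :=
            bs.N_padd _ _
        _ ≤ _ := by gcongr

lemma coord_sum (n : ℕ) (s : Finset ℕ) (w : ℕ → 𝕜) :
    bs.coord n (∑ j ∈ s, w j • bs.e j) = if n ∈ s then w n else 0 := by
  classical
  rw [map_sum]
  have : ∀ j ∈ s, bs.coord n (w j • bs.e j) = if n = j then w j else 0 := by
    intro j _
    rw [map_smul, bs.biorth n j, smul_eq_mul]
    split <;> simp
  rw [Finset.sum_congr rfl this, Finset.sum_ite_eq]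

lemma coord_proj (n : ℕ) (S : Finset ℕ) (x : X) :
    bs.coord n (bs.proj S x) = if n ∈ S then bs.coord n x else 0 :=
  bs.coord_sum n S _

lemma coord_indSign (n : ℕ) (w : ℕ → 𝕜) (E : Finset ℕ) :
    bs.coord n (bs.indSign w E) = if n ∈ E then w n else 0 :=
  bs.coord_sum n E w

lemma proj_add (S : Finset ℕ) (x y : X) : bs.proj S (x + y) = bs.proj S x + bs.proj S y := by
  unfold proj
  rw [← Finset.sum_add_distrib]
  refine Finset.sum_congr rfl fun n _ => ?_
  rw [map_add, add_smul]

lemma proj_sub (S : Finset ℕ) (x y : X) : bs.proj S (x - y) = bs.proj S x - bs.proj S y := by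
  unfold proj
  rw [← Finset.sum_sub_distrib]
  refine Finset.sum_congr rfl fun n _ => ?_
  rw [map_sub, sub_smul]

lemma proj_smul (S : Finset ℕ) (c : 𝕜) (x : X) : bs.proj S (c • x) = c • bs.proj S x := by
  unfold proj
  rw [Finset.smul_sum]
  refine Finset.sum_congr rfl fun n _ => ?_
  rw [map_smul, smul_eq_mul, mul_smul]

lemma proj_eq_zero (S : Finset ℕ) (x : X) (h : ∀ n ∈ S, bs.coord n x = 0) :
    bs.proj S x = 0 :=
  Finset.sum_eq_zero fun n hn => by rw [h n hn, zero_smul]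

lemma proj_union (S T : Finset ℕ) (hST : Disjoint S T) (x : X) :
    bs.proj (S ∪ T) x = bs.proj S x + bs.proj T x :=
  Finset.sum_union hST

lemma proj_indSign (S : Finset ℕ) (w : ℕ → 𝕜) (E : Finset ℕ) :
    bs.proj S (bs.indSign w E) = bs.indSign w (E ∩ S) := by
  classical
  unfold proj indSign
  have : ∀ n ∈ S, bs.coord n (∑ j ∈ E, w j • bs.e j) • bs.e n
      = if n ∈ E then w n • bs.e n else 0 := by
    intro n _
    rw [bs.coord_sum]
    split <;> simp
  rw [Finset.sum_congr rfl this, Finset.sum_ite_mem, Finset.inter_comm]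

lemma indSign_congr (w w' : ℕ → 𝕜) (E : Finset ℕ) (h : ∀ j ∈ E, w j = w' j) :
    bs.indSign w E = bs.indSign w' E :=
  Finset.sum_congr rfl fun j hj => by rw [h j hj]

lemma sum_ite_smul (S D : Finset ℕ) (hDS : D ⊆ S) (c : ℕ → 𝕜) :
    ∑ j ∈ S, (if j ∈ D then c j else 0) • bs.e j = ∑ j ∈ D, c j • bs.e j := by
  classical
  rw [← Finset.sum_subset hDS (fun x _ hx => by rw [if_neg hx, zero_smul])]
  exact Finset.sum_congr rfl fun j hj => by rw [if_pos hj]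

lemma indSign_union (w : ℕ → 𝕜) (E F : Finset ℕ) (h : Disjoint E F) :
    bs.indSign w (E ∪ F) = bs.indSign w E + bs.indSign w F :=
  Finset.sum_union h

lemma norm_sgn (z : 𝕜) : ‖sgn z‖ = 1 := by
  unfold sgn
  split
  · simp
  · rename_i hz
    rw [norm_div]
    rw [RCLike.norm_ofReal, abs_norm]
    rw [div_self (norm_ne_zero_iff.mpr (by assumption))]

lemma mul_sgn_self (z : 𝕜) (hz : z ≠ 0) : ((‖z‖ : ℝ) : 𝕜) * sgn z = z := by
  unfold sgn
  rw [if_neg hz]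
  have h0 : ((‖z‖ : ℝ) : 𝕜) ≠ 0 := RCLike.ofReal_ne_zero.mpr (norm_ne_zero_iff.mpr hz)
  field_simp

lemma norm_add_mul_sgn (z : 𝕜) {c : ℝ} (hc : 0 ≤ c) : ‖z + ((c : ℝ) : 𝕜) * sgn z‖ = ‖z‖ + c := by
  by_cases hz : z = 0
  · simp [hz, sgn, RCLike.norm_ofReal, abs_of_nonneg hc]
  · have hrw : z + ((c : ℝ) : 𝕜) * sgn z = (((‖z‖ + c : ℝ)) : 𝕜) * sgn z := by
      rw [RCLike.ofReal_add, add_mul, mul_sgn_self z hz]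
    rw [hrw, norm_mul, norm_sgn, mul_one, RCLike.norm_ofReal]
    have : (0:ℝ) ≤ ‖z‖ + c := by positivity
    rw [abs_of_nonneg this]

lemma norm_sub_mul_sgn (z : 𝕜) {c : ℝ} (hc : 0 ≤ c) : ‖z - ((c : ℝ) : 𝕜) * sgn z‖ = |‖z‖ - c| := by
  by_cases hz : z = 0
  · simp [hz, sgn, RCLike.norm_ofReal, abs_of_nonneg hc]
  · have hrw : z - ((c : ℝ) : 𝕜) * sgn z = (((‖z‖ - c : ℝ)) : 𝕜) * sgn z := by
      rw [RCLike.ofReal_sub, sub_mul, mul_sgn_self z hz]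
    rw [hrw, norm_mul, norm_sgn, mul_one, RCLike.norm_ofReal]

lemma minCoef_le {f : X} {A : Finset ℕ} {n : ℕ} (hn : n ∈ A) :
    bs.minCoef f A ≤ ‖bs.coord n f‖ := by
  apply csInf_le
  · exact ⟨0, by rintro r ⟨m, _, rfl⟩; positivity⟩
  · exact ⟨n, hn, rfl⟩

lemma le_minCoef {f : X} {A : Finset ℕ} {c : ℝ} (hA : A.Nonempty)
    (h : ∀ n ∈ A, c ≤ ‖bs.coord n f‖) : c ≤ bs.minCoef f A := by
  apply le_csInf
  · obtain ⟨n, hn⟩ := hA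
    exact ⟨_, ⟨n, hn, rfl⟩⟩
  · rintro r ⟨m, hm, rfl⟩
    exact h m hm

lemma minCoef_eq {f : X} {A : Finset ℕ} {c : ℝ} (hlow : ∀ n ∈ A, c ≤ ‖bs.coord n f‖)
    {n₀ : ℕ} (hn₀ : n₀ ∈ A) (hc : ‖bs.coord n₀ f‖ = c) : bs.minCoef f A = c := by
  refine le_antisymm ?_ (bs.le_minCoef ⟨n₀, hn₀⟩ hlow)
  rw [← hc]
  exact bs.minCoef_le hn₀

lemma exists_coord_small (f : X) (δ : ℝ) (hδ : 0 < δ) :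
    ∃ Z : Finset ℕ, ∀ j ∉ Z, ‖bs.coord j f‖ ≤ δ := by
  obtain ⟨c, hc⟩ := bs.coord_bdd
  set c' := max c 0 with hc'
  have hc'0 : 0 ≤ c' := le_max_right _ _
  obtain ⟨g, hg, hgN⟩ := bs.dense_span f (δ / (c' + 1)) (by positivity)
  rw [Finsupp.mem_span_range_iff_exists_finsupp] at hg
  obtain ⟨w, hw⟩ := hg
  refine ⟨w.support, fun j hj => ?_⟩
  have hcg : bs.coord j g = 0 := by
    rw [← hw, Finsupp.sum]
    rw [bs.coord_sum j w.support w]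
    simp [hj]
  have h1 : bs.coord j f = bs.coord j (f - g) := by rw [map_sub, hcg, sub_zero]
  rw [h1]
  calc ‖bs.coord j (f - g)‖ ≤ c * bs.N (f - g) := hc j (f - g)
    _ ≤ c' * bs.N (f - g) := by
        apply mul_le_mul_of_nonneg_right (le_max_left _ _) (bs.N_nonneg _)
    _ ≤ c' * (δ / (c' + 1)) := by
        apply mul_le_mul_of_nonneg_left (le_of_lt hgN) hc'0
    _ ≤ δ := by
        rw [div_eq_inv_mul, ← mul_assoc]
        have : c' * (c' + 1)⁻¹ ≤ 1 := by
          rw [mul_inv_le_iff₀ (by positivity)]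
          linarith
        nlinarith [this, hδ.le]

end Helpers

end PBasis

open PBasis in
set_option maxHeartbeats 4000000 in
/-- If a basis of a `p`-Banach space is `C_pg`-RGPCC, then it is greedy with
greedy constant `C_g ≤ A_p² · C_pg²`, where `A_p = (2^p − 1)^{−1/p}`. -/
theorem RGPCC_implies_greedy {𝕜 : Type*} [RCLike 𝕜] {X : Type*} [AddCommGroup X]
    [Module 𝕜 X] {p : ℝ} (hp : 0 < p) (hp1 : p ≤ 1) (bs : PBasis 𝕜 X p)
    (Cpg : ℝ) (hCpg : 0 < Cpg) (h : bs.IsRGPCCWith Cpg) :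
    bs.IsGreedyWith ((((2 : ℝ) ^ p - 1) ^ (-(1 / p))) ^ 2 * Cpg ^ 2) := by
  classical
  obtain ⟨ce, hce⟩ := bs.e_bdd
  have hce0 : 0 ≤ ce := le_trans (bs.N_nonneg (bs.e 0)) (hce 0)
  have hC1 : 1 ≤ Cpg := by
    have h0 := h (bs.e 0) ∅ ∅ (fun _ => 1) (fun n hn => absurd hn (Finset.notMem_empty n))
      rfl (fun j hj => absurd hj (Finset.notMem_empty j))
    simp only [PBasis.proj, PBasis.indSign, Finset.sum_empty, smul_zero, sub_zero] at h0
    have he0 : 0 < bs.N (bs.e 0) := by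
      rcases lt_or_eq_of_le (bs.N_nonneg (bs.e 0)) with h' | h'
      · exact h'
      · exfalso
        have hz : bs.e 0 = 0 := (bs.N_eq_zero_iff _).1 h'.symm
        have hb := bs.biorth 0 0
        rw [hz] at hb
        simp at hb
    nlinarith
  have h2p1 : (1:ℝ) < 2 ^ p := by
    rw [Real.one_lt_rpow_iff_of_pos (by norm_num)]
    left
    exact ⟨one_lt_two, hp⟩
  set t : ℝ := 2 ^ p - 1 with htdef
  have ht0 : 0 < t := by simp only [htdef]; linarith
  have ht1 : t ≤ 1 := by
    have h2 : (2:ℝ) ^ p ≤ 2 ^ (1:ℝ) := Real.rpow_le_rpow_of_exponent_le one_le_two hp1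
    rw [Real.rpow_one] at h2
    simp only [htdef]
    linarith
  have htinv1 : 1 ≤ t⁻¹ := (one_le_inv₀ ht0).mpr ht1
  set Ap : ℝ := t ^ (-(1/p)) with hApdef
  have hAp0 : 0 < Ap := Real.rpow_pos_of_pos ht0 _
  have hAp1 : 1 ≤ Ap := by
    apply Real.one_le_rpow_of_pos_of_le_one_of_nonpos ht0 ht1
    rw [neg_nonpos]
    positivity
  have hApp : Ap ^ p = t⁻¹ := by
    rw [hApdef, ← Real.rpow_mul ht0.le]
    have hexp : (-(1/p)) * p = -1 := by field_simp
    rw [hexp, Real.rpow_neg_one]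
  intro f A B₀ a hGA hcardB₀
  rcases Finset.eq_empty_or_nonempty A with hAe | hAne
  · have hB₀ : B₀ = ∅ := by
      rw [hAe, Finset.card_empty, Nat.le_zero] at hcardB₀
      exact Finset.card_eq_zero.1 hcardB₀
    rw [hAe, hB₀]
    simp only [PBasis.proj, Finset.sum_empty, sub_zero]
    have hc1 : 1 ≤ Ap ^ 2 * Cpg ^ 2 := by
      have h1 : 1 ≤ Ap ^ 2 := by nlinarith
      have h2 : 1 ≤ Cpg ^ 2 := by nlinarith
      nlinarith
    exact le_mul_of_one_le_left (bs.N_nonneg f) hc1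
  -- main case
  obtain ⟨B, hB₀B, hBcard⟩ := Infinite.exists_superset_card_eq B₀ A.card hcardB₀
  have hy_eq : ∑ j ∈ B, (fun j => if j ∈ B₀ then a j else 0) j • bs.e j
      = ∑ j ∈ B₀, a j • bs.e j := by
    rw [← Finset.sum_subset hB₀B (fun j _ hjB₀ => by simp [hjB₀])]
    exact Finset.sum_congr rfl fun j hj => by simp [hj]
  rw [← hy_eq]
  set a' : ℕ → 𝕜 := fun j => if j ∈ B₀ then a j else 0 with ha'
  set y : X := ∑ j ∈ B, a' j • bs.e j with hy
  set g : X := f - y with hgdef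
  have hy_ind : y = bs.indSign a' B := rfl
  set α : ℝ := bs.minCoef f A with hα
  have hα0 : 0 ≤ α := bs.le_minCoef hAne (fun n _ => norm_nonneg _)
  have hαA : ∀ n ∈ A, α ≤ ‖bs.coord n f‖ := fun n hn => bs.minCoef_le hn
  have hαout : ∀ m, m ∉ A → ‖bs.coord m f‖ ≤ α := by
    intro m hm
    exact bs.le_minCoef hAne (fun n hn => hGA n hn m hm)
  set r : ℕ := (B \ A).card with hr
  have hrAB : (A \ B).card = r := by
    have h1 := Finset.card_sdiff_add_card_inter A B
    have h2 := Finset.card_sdiff_add_card_inter B A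
    rw [Finset.inter_comm] at h2
    omega
  -- reduce to p-th power inequality
  have hNg0 : 0 ≤ bs.N g := bs.N_nonneg g
  suffices hfinal : bs.N (f - bs.proj A f) ^ p ≤ t⁻¹ * (Cpg ^ 2 * bs.N g) ^ p by
    by_contra hlt
    push_neg at hlt
    have hR0 : 0 ≤ Ap ^ 2 * Cpg ^ 2 * bs.N g := by positivity
    have hpow := Real.rpow_lt_rpow hR0 hlt hp
    have hsplit : (Ap ^ 2 * Cpg ^ 2 * bs.N g) ^ p = (Ap ^ p) ^ 2 * (Cpg ^ 2 * bs.N g) ^ p := by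
      rw [mul_assoc, Real.mul_rpow (by positivity) (by positivity), ← Real.rpow_natCast Ap 2,
        ← Real.rpow_natCast (Ap ^ p) 2, ← Real.rpow_mul hAp0.le, ← Real.rpow_mul hAp0.le]
      ring_nf
    rw [hsplit, hApp] at hpow
    have hmono : t⁻¹ * (Cpg ^ 2 * bs.N g) ^ p ≤ t⁻¹ ^ 2 * (Cpg ^ 2 * bs.N g) ^ p := by
      have h1 : t⁻¹ ≤ t⁻¹ ^ 2 := by nlinarith
      have h2 : 0 ≤ (Cpg ^ 2 * bs.N g) ^ p := by positivity
      nlinarith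
    linarith
  -- the key estimate, with error parameter (1/2)^n
  have key : ∀ n : ℕ, bs.N (f - bs.proj A f) ^ p ≤ t⁻¹ * (Cpg ^ 2 * bs.N g) ^ p +
      (t⁻¹ * (Cpg ^ 2) ^ p + 1) * (((r : ℝ) + 1) * ce ^ p * (((1/2 : ℝ) ^ n) ^ p)) := by
    intro n
    set δ : ℝ := (1/2 : ℝ) ^ n with hδdef
    have hδ0 : 0 < δ := by positivity
    obtain ⟨Z, hZ⟩ := bs.exists_coord_small f δ hδ0
    set n₀ : ℕ := (A ∪ B ∪ Z).sup id + 1 with hn₀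
    set Ffar : Finset ℕ := (Finset.range r).image (fun i => n₀ + i) with hFfar
    set z₀ : ℕ := n₀ + r with hz₀
    set Fbig : Finset ℕ := insert z₀ Ffar with hFbig
    have hn₀le : ∀ j ∈ A ∪ B ∪ Z, j < n₀ := by
      intro j hj
      have hle := Finset.le_sup (f := id) hj
      simp only [id_eq] at hle
      omega
    have hFfar_ge : ∀ j ∈ Ffar, n₀ ≤ j := by
      intro j hj
      simp only [hFfar, Finset.mem_image, Finset.mem_range] at hj
      obtain ⟨i, _, rfl⟩ := hj
      omega
    have hFbig_ge : ∀ j ∈ Fbig, n₀ ≤ j := by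
      intro j hj
      rcases Finset.mem_insert.1 hj with rfl | hj
      · omega
      · exact hFfar_ge j hj
    have hFbigABZ : ∀ j ∈ Fbig, j ∉ A ∪ B ∪ Z := by
      intro j hj hmem
      exact absurd (hFbig_ge j hj) (by have := hn₀le j hmem; omega)
    have hFbigA : ∀ j ∈ Fbig, j ∉ A := fun j hj hA =>
      hFbigABZ j hj (by simp [Finset.mem_union, hA])
    have hFbigB : ∀ j ∈ Fbig, j ∉ B := fun j hj hB =>
      hFbigABZ j hj (by simp [Finset.mem_union, hB])
    have hFbigsmall : ∀ j ∈ Fbig, ‖bs.coord j f‖ ≤ δ := by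
      intro j hj
      exact hZ j (fun hZm => hFbigABZ j hj (by simp [Finset.mem_union, hZm]))
    have hz₀Ffar : z₀ ∉ Ffar := by
      intro hmem
      simp only [hFfar, Finset.mem_image, Finset.mem_range] at hmem
      obtain ⟨i, hi, hieq⟩ := hmem
      omega
    have hFfarcard : Ffar.card = r := by
      rw [hFfar, Finset.card_image_of_injective _ (fun i j hij => by omega), Finset.card_range]
    have hFbigcard : Fbig.card = r + 1 := by
      rw [hFbig, Finset.card_insert_of_notMem hz₀Ffar, hFfarcard]
    have hFfarFbig : Ffar ⊆ Fbig := Finset.subset_insert _ _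
    have hz₀Fbig : z₀ ∈ Fbig := Finset.mem_insert_self _ _
    -- hatted vectors
    set fh : X := f - bs.proj Fbig f with hfh
    set gh : X := fh - y with hgh
    set T : X := fh - bs.proj (A ∪ B) fh with hT
    have hcoordfh : ∀ m, bs.coord m fh = if m ∈ Fbig then 0 else bs.coord m f := by
      intro m
      rw [hfh, map_sub, bs.coord_proj]
      split <;> simp
    have hcoordT : ∀ m, bs.coord m T = if m ∈ A ∪ B ∨ m ∈ Fbig then 0 else bs.coord m f := by
      intro m
      rw [hT, map_sub, bs.coord_proj, hcoordfh]
      by_cases h1 : m ∈ A ∪ B <;> by_cases h2 : m ∈ Fbig <;> simp [h1, h2]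
    have hcoordTle : ∀ m, ‖bs.coord m T‖ ≤ α := by
      intro m
      rw [hcoordT]
      split
      · simpa using hα0
      · rename_i hm
        push_neg at hm
        refine hαout m fun hA => ?_
        exact hm.1 (Finset.mem_union_left _ hA)
    have hcoordTF : ∀ m, m ∈ A ∪ B ∨ m ∈ Fbig → bs.coord m T = 0 := by
      intro m hm
      rw [hcoordT, if_pos hm]
    -- coordinates of gh
    have hcoordy : ∀ m, bs.coord m y = if m ∈ B then a' m else 0 := fun m => bs.coord_sum m B a'
    have hcoordgh : ∀ m, bs.coord m gh = bs.coord m fh - (if m ∈ B then a' m else 0) := by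
      intro m
      rw [hgh, map_sub, hcoordy]
    have hcoordgh_out : ∀ m, m ∉ B → bs.coord m gh = bs.coord m fh := by
      intro m hm
      rw [hcoordgh, if_neg hm, sub_zero]
    -- CORE estimate
    set αK : 𝕜 := ((α : ℝ) : 𝕜) with hαK
    have hnormαK : ‖αK‖ = α := by
      rw [hαK, RCLike.norm_ofReal, abs_of_nonneg hα0]
    have hFbigA : ∀ j ∈ Fbig, j ∉ A := fun j hj hA => hFbigABZ j hj (by simp [hA])
    have hFbigB : ∀ j ∈ Fbig, j ∉ B := fun j hj hB => hFbigABZ j hj (by simp [hB])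
    have hFbigAB : ∀ j ∈ Fbig, j ∉ A ∪ B := by
      intro j hj hmem
      rcases Finset.mem_union.1 hmem with h1 | h1
      · exact hFbigA j hj h1
      · exact hFbigB j hj h1
    have hz₀AB : z₀ ∉ A ∪ B := hFbigAB z₀ hz₀Fbig
    have hcoordTzAB : ∀ m, m ∈ A ∪ B → bs.coord m T = 0 := fun m hm => hcoordTF m (Or.inl hm)
    have hcoordTzeroF : ∀ m, m ∈ Fbig → bs.coord m T = 0 := fun m hm => hcoordTF m (Or.inr hm)
    have hcoordfhFbig : ∀ m ∈ Fbig, bs.coord m fh = 0 := by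
      intro m hm
      rw [hcoordfh, if_pos hm]
    have hcoordghFbig : ∀ m ∈ Fbig, bs.coord m gh = 0 := by
      intro m hm
      rw [hcoordgh_out m (hFbigB m hm), hcoordfhFbig m hm]
    have CORE : ∀ D : Finset ℕ, D ⊆ B \ A → ∀ ω : ℕ → 𝕜, (∀ j ∈ D, ‖ω j‖ = 1) →
        bs.N (T + αK • bs.indSign ω D) ≤ Cpg ^ 2 * bs.N gh := by
      intro D hDsub ω hωs
      have hDB : ∀ j ∈ D, j ∈ B := fun j hj => (Finset.mem_sdiff.1 (hDsub hj)).1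
      have hDnA : ∀ j ∈ D, j ∉ A := fun j hj => (Finset.mem_sdiff.1 (hDsub hj)).2
      have hdr : D.card ≤ r := by rw [hr]; exact Finset.card_le_card hDsub
      obtain ⟨F', hF'sub, hF'card⟩ := Finset.exists_subset_card_eq
        (show D.card ≤ Ffar.card by rw [hFfarcard]; exact hdr)
      obtain ⟨R, hRsub, hRcard⟩ := Finset.exists_subset_card_eq
        (show D.card ≤ (A \ B).card by rw [hrAB]; exact hdr)
      have hF'Fbig : ∀ j ∈ F', j ∈ Fbig := fun j hj => hFfarFbig (hF'sub hj)
      have hF'AB : ∀ j ∈ F', j ∉ A ∪ B := fun j hj => hFbigAB j (hF'Fbig j hj)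
      have hRAB : R ⊆ A ∪ B := fun j hj => Finset.mem_union_left _ (Finset.mem_sdiff.1 (hRsub hj)).1
      -- ===== Step III =====
      have stepIII : bs.N (T + αK • bs.indSign (fun _ => (1:𝕜)) F') ≤ Cpg * bs.N gh := by
        set μ : ℕ → 𝕜 := fun j => if j ∈ A ∪ B then sgn (bs.coord j gh) else 1 with hμ
        set Γ : Finset ℕ := insert z₀ (A ∪ B) with hΓ
        set E : Finset ℕ := insert z₀ (((A ∪ B) \ R) ∪ F') with hE
        set W : X := gh + αK • bs.indSign μ E with hW
        have hz₀E : z₀ ∈ E := Finset.mem_insert_self _ _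
        have hz₀Γ : z₀ ∈ Γ := Finset.mem_insert_self _ _
        have hz₀F' : z₀ ∉ F' := fun hmem => hz₀Ffar (hF'sub hmem)
        have hcoordW : ∀ m, bs.coord m W =
            bs.coord m gh + (if m ∈ E then αK * μ m else 0) := by
          intro m
          rw [hW, map_add, map_smul, bs.coord_indSign, smul_eq_mul, mul_ite, mul_zero]
        have hz₀n : ‖bs.coord z₀ W‖ = α := by
          rw [hcoordW, hcoordghFbig z₀ hz₀Fbig, if_pos hz₀E, zero_add]
          have hμz : μ z₀ = 1 := by rw [hμ]; simp [hz₀AB]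
          rw [hμz, mul_one, hαK, RCLike.norm_ofReal, abs_of_nonneg hα0]
        have hin : ∀ n ∈ Γ, α ≤ ‖bs.coord n W‖ := by
          intro n hn
          rcases Finset.mem_insert.1 hn with rfl | hnAB
          · rw [hz₀n]
          · by_cases hnR : n ∈ R
            · have hnADB := Finset.mem_sdiff.1 (hRsub hnR)
              have hnE : n ∉ E := by
                rw [hE]
                intro hmem
                rcases Finset.mem_insert.1 hmem with rfl | hmem
                · exact hz₀AB hnAB
                · rcases Finset.mem_union.1 hmem with h1 | h1
                  · exact (Finset.mem_sdiff.1 h1).2 hnR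
                  · exact hF'AB n h1 hnAB
              rw [hcoordW, if_neg hnE, add_zero]
              have hnB : n ∉ B := hnADB.2
              have hnFbig : n ∉ Fbig := fun hF => hFbigA n hF hnADB.1
              rw [hcoordgh_out n hnB, hcoordfh, if_neg hnFbig]
              exact hαA n hnADB.1
            · have hnE : n ∈ E := by
                rw [hE]
                exact Finset.mem_insert_of_mem (Finset.mem_union_left _
                  (Finset.mem_sdiff.2 ⟨hnAB, hnR⟩))
              rw [hcoordW, if_pos hnE]
              have hμn : μ n = sgn (bs.coord n gh) := by rw [hμ]; simp [hnAB]
              rw [hμn, hαK, norm_add_mul_sgn _ hα0]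
              linarith [norm_nonneg (bs.coord n gh)]
        have hout : ∀ m, m ∉ Γ → ‖bs.coord m W‖ ≤ α := by
          intro m hm
          have hmz₀ : m ≠ z₀ := fun hmem => hm (hmem ▸ hz₀Γ)
          have hmAB : m ∉ A ∪ B := fun hmem => hm (Finset.mem_insert_of_mem hmem)
          by_cases hmE : m ∈ E
          · have hmF' : m ∈ F' := by
              rcases Finset.mem_insert.1 hmE with h1 | h1
              · exact absurd h1 hmz₀
              · rcases Finset.mem_union.1 h1 with h2 | h2
                · exact absurd (Finset.mem_sdiff.1 h2).1 hmAB
                · exact h2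
            rw [hcoordW, hcoordghFbig m (hF'Fbig m hmF'), if_pos hmE, zero_add]
            have hμm : μ m = 1 := by rw [hμ]; simp [hmAB]
            rw [hμm, mul_one, hαK, RCLike.norm_ofReal, abs_of_nonneg hα0]
          · rw [hcoordW, if_neg hmE, add_zero]
            have hmB : m ∉ B := fun hmem => hmAB (Finset.mem_union_right _ hmem)
            rw [hcoordgh_out m hmB, hcoordfh]
            split
            · simpa using hα0
            · exact hαout m (fun hmem => hmAB (Finset.mem_union_left _ hmem))
        have hgreedy : bs.IsGreedySet W Γ := fun n hn m hm => (hout m hm).trans (hin n hn)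
        have hmin : bs.minCoef W Γ = α := bs.minCoef_eq hin hz₀Γ hz₀n
        have hEcard : E.card = Γ.card := by
          have hd1 : Disjoint ((A ∪ B) \ R) F' := by
            rw [Finset.disjoint_right]
            intro j hj
            exact fun hmem => hF'AB j hj (Finset.mem_sdiff.1 hmem).1
          have hz₀mem : z₀ ∉ ((A ∪ B) \ R) ∪ F' := by
            intro hmem
            rcases Finset.mem_union.1 hmem with h1 | h1
            · exact hz₀AB (Finset.mem_sdiff.1 h1).1
            · exact hz₀F' h1
          rw [hE, hΓ, Finset.card_insert_of_notMem hz₀mem,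
            Finset.card_insert_of_notMem hz₀AB, Finset.card_union_of_disjoint hd1,
            Finset.card_sdiff_of_subset hRAB]
          have h1 : R.card ≤ (A ∪ B).card := Finset.card_le_card hRAB
          omega
        have hsign : IsSign μ E := by
          intro j _
          simp only [hμ]
          split
          · exact norm_sgn _
          · exact norm_one
        have happ := h W Γ E μ hgreedy hEcard hsign
        rw [hmin] at happ
        have hid2 : W - ((α : ℝ) : 𝕜) • bs.indSign μ E = gh := by
          rw [hW, hαK]
          abel
        have hEsplit : E = (insert z₀ ((A ∪ B) \ R)) ∪ F' := by
          rw [hE, Finset.insert_union]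
        have hdisj2 : Disjoint (insert z₀ ((A ∪ B) \ R)) F' := by
          rw [Finset.disjoint_right]
          intro j hj hmem
          rcases Finset.mem_insert.1 hmem with rfl | h1
          · exact hz₀F' hj
          · exact hF'AB j hj (Finset.mem_sdiff.1 h1).1
        have hISsplit : bs.indSign μ E =
            bs.indSign μ (insert z₀ ((A ∪ B) \ R)) + bs.indSign μ F' := by
          rw [hEsplit, bs.indSign_union _ _ _ hdisj2]
        have hISF' : bs.indSign μ F' = bs.indSign (fun _ => (1:𝕜)) F' := by
          refine bs.indSign_congr _ _ _ fun j hj => ?_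
          rw [hμ]
          simp [hF'AB j hj]
        have hprojΓfh : bs.proj Γ fh = bs.proj (A ∪ B) fh := by
          rw [hΓ, Finset.insert_eq, bs.proj_union _ _ (by
            rw [Finset.disjoint_left]
            intro j hj
            rw [Finset.mem_singleton] at hj
            subst hj
            exact hz₀AB)]
          have hz : bs.proj {z₀} fh = 0 := bs.proj_eq_zero _ _ (by
            intro m hm
            rw [Finset.mem_singleton] at hm
            subst hm
            exact hcoordfhFbig z₀ hz₀Fbig)
          rw [hz, zero_add]
        have hprojΓy : bs.proj Γ y = y := by
          rw [hy_ind, bs.proj_indSign]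
          congr 1
          rw [Finset.inter_eq_left]
          intro j hj
          exact Finset.mem_insert_of_mem (Finset.mem_union_right _ hj)
        have hEΓ : E ∩ Γ = insert z₀ ((A ∪ B) \ R) := by
          rw [hEsplit]
          rw [Finset.union_inter_distrib_right]
          have h1 : insert z₀ ((A ∪ B) \ R) ∩ Γ = insert z₀ ((A ∪ B) \ R) := by
            rw [Finset.inter_eq_left]
            intro j hj
            rcases Finset.mem_insert.1 hj with rfl | h2
            · exact hz₀Γ
            · exact Finset.mem_insert_of_mem (Finset.mem_sdiff.1 h2).1
          have h2 : F' ∩ Γ = ∅ := by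
            rw [Finset.eq_empty_iff_forall_notMem]
            intro j hj
            have hj1 := Finset.mem_inter.1 hj
            rcases Finset.mem_insert.1 hj1.2 with rfl | h3
            · exact hz₀F' hj1.1
            · exact hF'AB j hj1.1 h3
          rw [h1, h2, Finset.union_empty]
        have hid1 : W - bs.proj Γ W = T + αK • bs.indSign (fun _ => (1:𝕜)) F' := by
          rw [hW, bs.proj_add, bs.proj_smul, bs.proj_indSign, hEΓ]
          have hprojgh : bs.proj Γ gh = bs.proj (A ∪ B) fh - y := by
            rw [hgh, bs.proj_sub, hprojΓfh, hprojΓy]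
          rw [hprojgh]
          have hT' : T = fh - bs.proj (A ∪ B) fh := hT
          rw [hISsplit, hISF', hgh, hT']
          rw [smul_add]
          abel
        rw [hid1, hid2] at happ
        exact happ
      -- ===== Step Ib =====
      have stepIb : bs.N (T + αK • bs.indSign ω D) ≤
          Cpg * bs.N (T + αK • bs.indSign (fun _ => (1:𝕜)) F') := by
        rcases Finset.eq_empty_or_nonempty D with hD0 | hDne
        · have hF'0 : F' = ∅ := Finset.card_eq_zero.1 (by rw [hF'card, hD0, Finset.card_empty])
          rw [hD0, hF'0]
          simp only [PBasis.indSign, Finset.sum_empty, smul_zero, add_zero]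
          exact le_mul_of_one_le_left (bs.N_nonneg _) hC1
        · have hFfarne : Ffar.Nonempty := by
            rw [← Finset.card_pos, hFfarcard]
            have := Finset.card_pos.2 hDne
            omega
          obtain ⟨n₁, hn₁⟩ := hFfarne
          set W₂ : X := T + αK • bs.indSign ω D + αK • bs.indSign (fun _ => (1:𝕜)) Ffar
            with hW₂
          set E₂ : Finset ℕ := D ∪ (Ffar \ F') with hE₂
          set μ₂ : ℕ → 𝕜 := fun j => if j ∈ D then ω j else 1 with hμ₂
          have hDFfar : Disjoint D Ffar := by
            rw [Finset.disjoint_right]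
            intro j hj
            exact fun hmem => hFbigB j (hFfarFbig hj) (hDB j hmem)
          have hcoordW₂ : ∀ m, bs.coord m W₂ = bs.coord m T +
              (if m ∈ D then αK * ω m else 0) + (if m ∈ Ffar then αK else 0) := by
            intro m
            rw [hW₂, map_add, map_add, map_smul, map_smul, bs.coord_indSign, bs.coord_indSign,
              smul_eq_mul, smul_eq_mul, mul_ite, mul_zero, mul_ite, mul_zero, mul_one]
          have hFfarnorm : ∀ n ∈ Ffar, ‖bs.coord n W₂‖ = α := by
            intro n hn
            have hnD : n ∉ D := Finset.disjoint_right.1 hDFfar hn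
            rw [hcoordW₂, hcoordTzeroF n (hFfarFbig hn), if_neg hnD, if_pos hn, zero_add,
              zero_add, hαK, RCLike.norm_ofReal, abs_of_nonneg hα0]
          have hin₂ : ∀ n ∈ Ffar, α ≤ ‖bs.coord n W₂‖ := fun n hn => (hFfarnorm n hn).ge
          have hout₂ : ∀ m, m ∉ Ffar → ‖bs.coord m W₂‖ ≤ α := by
            intro m hm
            by_cases hmD : m ∈ D
            · rw [hcoordW₂, hcoordTzAB m (Finset.mem_union_right _ (hDB m hmD)),
                if_pos hmD, if_neg hm, zero_add, add_zero, norm_mul, hωs m hmD, mul_one,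
                hαK, RCLike.norm_ofReal, abs_of_nonneg hα0]
            · rw [hcoordW₂, if_neg hmD, if_neg hm, add_zero, add_zero]
              exact hcoordTle m
          have hgreedy₂ : bs.IsGreedySet W₂ Ffar := fun n hn m hm =>
            (hout₂ m hm).trans (hin₂ n hn)
          have hmin₂ : bs.minCoef W₂ Ffar = α := bs.minCoef_eq hin₂ hn₁ (hFfarnorm n₁ hn₁)
          have hE₂card : E₂.card = Ffar.card := by
            have hdisj : Disjoint D (Ffar \ F') := hDFfar.mono_right (Finset.sdiff_subset)
            rw [hE₂, Finset.card_union_of_disjoint hdisj, Finset.card_sdiff_of_subset hF'sub,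
              hFfarcard, hF'card]
            omega
          have hsign₂ : IsSign μ₂ E₂ := by
            intro j hj
            simp only [hμ₂]
            split
            · rename_i hjD
              exact hωs j hjD
            · exact norm_one
          have happ := h W₂ Ffar E₂ μ₂ hgreedy₂ hE₂card hsign₂
          rw [hmin₂] at happ
          have hISE₂ : bs.indSign μ₂ E₂ = bs.indSign ω D +
              bs.indSign (fun _ => (1:𝕜)) (Ffar \ F') := by
            rw [hE₂, bs.indSign_union _ _ _ (hDFfar.mono_right Finset.sdiff_subset)]
            congr 1
            · refine bs.indSign_congr _ _ _ fun j hj => ?_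
              simp only [hμ₂]
              rw [if_pos hj]
            · refine bs.indSign_congr _ _ _ fun j hj => ?_
              simp only [hμ₂]
              rw [if_neg (Finset.disjoint_right.1
                (hDFfar.mono_right Finset.sdiff_subset) hj)]
          have hISFfar : bs.indSign (fun _ => (1:𝕜)) Ffar =
              bs.indSign (fun _ => (1:𝕜)) (Ffar \ F') + bs.indSign (fun _ => (1:𝕜)) F' := by
            rw [← bs.indSign_union _ _ _ Finset.sdiff_disjoint, Finset.sdiff_union_of_subset hF'sub]
          have hid2 : W₂ - ((α : ℝ) : 𝕜) • bs.indSign μ₂ E₂ =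
              T + αK • bs.indSign (fun _ => (1:𝕜)) F' := by
            rw [hW₂, hISE₂, hISFfar, ← hαK]
            rw [smul_add, smul_add]
            abel
          have hprojW₂ : bs.proj Ffar W₂ = αK • bs.indSign (fun _ => (1:𝕜)) Ffar := by
            rw [hW₂, bs.proj_add, bs.proj_add, bs.proj_smul, bs.proj_smul,
              bs.proj_indSign, bs.proj_indSign]
            have h1 : bs.proj Ffar T = 0 := bs.proj_eq_zero _ _ fun m hm =>
              hcoordTzeroF m (hFfarFbig hm)
            have h2 : D ∩ Ffar = ∅ := Finset.disjoint_iff_inter_eq_empty.1 hDFfar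
            rw [h1, h2, Finset.inter_self]
            simp [PBasis.indSign]
          have hid1 : W₂ - bs.proj Ffar W₂ = T + αK • bs.indSign ω D := by
            rw [hprojW₂, hW₂]
            abel
          rw [hid1, hid2] at happ
          exact happ
      calc bs.N (T + αK • bs.indSign ω D) ≤ Cpg * bs.N (T + αK • bs.indSign (fun _ => (1:𝕜)) F') :=
            stepIb
        _ ≤ Cpg * (Cpg * bs.N gh) := mul_le_mul_of_nonneg_left stepIII hCpg.le
        _ = Cpg ^ 2 * bs.N gh := by ring
    -- dyadic decomposition lemma
    set Se : ℝ := ∑ j ∈ B \ A, bs.N (bs.e j) ^ p with hSe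
    have hSe0 : 0 ≤ Se := Finset.sum_nonneg fun j _ => Real.rpow_nonneg (bs.N_nonneg _) _
    have LEMA : ∀ (K : ℕ) (v : ℕ → 𝕜), (∀ j ∈ B \ A, ‖v j‖ ≤ α) →
        bs.N (T + bs.indSign v (B \ A)) ^ p ≤ t⁻¹ * (Cpg ^ 2 * bs.N gh) ^ p +
          (((1/2 : ℝ) ^ K * α) ^ p) * Se := by
      have hNgh0 : 0 ≤ Cpg ^ 2 * bs.N gh := mul_nonneg (by positivity) (bs.N_nonneg _)
      have hΦ0 : 0 ≤ (Cpg ^ 2 * bs.N gh) ^ p := Real.rpow_nonneg hNgh0 _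
      have hT0 : bs.N T ^ p ≤ (Cpg ^ 2 * bs.N gh) ^ p := by
        have hc := CORE ∅ (Finset.empty_subset _) (fun _ => 1)
          (fun j hj => absurd hj (Finset.notMem_empty j))
        have h0 : bs.indSign (fun _ => (1:𝕜)) (∅ : Finset ℕ) = 0 := Finset.sum_empty
        rw [h0, smul_zero, add_zero] at hc
        exact Real.rpow_le_rpow (bs.N_nonneg _) hc hp.le
      intro K
      induction K with
      | zero =>
        intro v hv
        have h1 := bs.N_padd T (bs.indSign v (B \ A))
        have h2 : bs.N (bs.indSign v (B \ A)) ^ p ≤ α ^ p * Se := by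
          calc bs.N (bs.indSign v (B \ A)) ^ p ≤ ∑ j ∈ B \ A, bs.N (v j • bs.e j) ^ p :=
                bs.N_sum_le hp _ _
            _ ≤ ∑ j ∈ B \ A, α ^ p * bs.N (bs.e j) ^ p := by
                refine Finset.sum_le_sum fun j hj => ?_
                rw [bs.N_smul, Real.mul_rpow (norm_nonneg _) (bs.N_nonneg _)]
                exact mul_le_mul_of_nonneg_right
                  (Real.rpow_le_rpow (norm_nonneg _) (hv j hj) hp.le)
                  (Real.rpow_nonneg (bs.N_nonneg _) _)
            _ = α ^ p * Se := by rw [hSe, Finset.mul_sum]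
        have h3 : (((1/2:ℝ) ^ 0 * α)) ^ p = α ^ p := by norm_num
        rw [h3]
        have h4 : (Cpg ^ 2 * bs.N gh) ^ p ≤ t⁻¹ * (Cpg ^ 2 * bs.N gh) ^ p :=
          le_mul_of_one_le_left hΦ0 htinv1
        linarith
      | succ K ih =>
        intro v hv
        set D : Finset ℕ := (B \ A).filter (fun j => α/2 < ‖v j‖) with hD
        have hDsub : D ⊆ B \ A := Finset.filter_subset _ _
        set ω : ℕ → 𝕜 := fun j => sgn (v j) with hω
        set v' : ℕ → 𝕜 := fun j => v j - (if j ∈ D then ((α/2 : ℝ) : 𝕜) * sgn (v j) else 0)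
          with hv'
        have hv'le : ∀ j ∈ B \ A, ‖v' j‖ ≤ α/2 := by
          intro j hj
          by_cases hjD : j ∈ D
          · have hj2 : α/2 < ‖v j‖ := by
              have := (Finset.mem_filter.1 hjD).2
              exact this
            simp only [hv', if_pos hjD]
            rw [norm_sub_mul_sgn (v j) (by positivity : (0:ℝ) ≤ α/2), abs_le]
            constructor
            · linarith
            · linarith [hv j hj]
          · have hj2 : ‖v j‖ ≤ α/2 := by
              by_contra hlt
              exact hjD (Finset.mem_filter.2 ⟨hj, lt_of_not_ge hlt⟩)
            simp only [hv', if_neg hjD, sub_zero]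
            exact hj2
        have h2v'le : ∀ j ∈ B \ A, ‖(2 : 𝕜) * v' j‖ ≤ α := by
          intro j hj
          rw [norm_mul]
          have h2n : ‖(2:𝕜)‖ = 2 := by simp
          rw [h2n]
          linarith [hv'le j hj]
        -- the splitting identity
        have hcast : ((α/2 : ℝ) : 𝕜) = (1/2 : 𝕜) * αK := by
          rw [hαK]
          push_cast
          ring
        have hdiff : bs.indSign v (B \ A) =
            (1/2 : 𝕜) • (αK • bs.indSign ω D) + bs.indSign v' (B \ A) := by
          simp only [PBasis.indSign]
          rw [Finset.smul_sum, Finset.smul_sum]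
          have hvv : ∀ j ∈ B \ A, v j • bs.e j =
              (if j ∈ D then ((α/2 : ℝ) : 𝕜) * sgn (v j) else 0) • bs.e j + v' j • bs.e j := by
            intro j _
            rw [← add_smul]
            congr 1
            simp only [hv']
            ring
          rw [Finset.sum_congr rfl hvv, Finset.sum_add_distrib]
          congr 1
          rw [bs.sum_ite_smul _ _ hDsub]
          refine Finset.sum_congr rfl fun j hj => ?_
          simp only [hω]
          rw [hcast]
          module
        have hhalf2 : (1/2 : 𝕜) • bs.indSign (fun j => (2:𝕜) * v' j) (B \ A) =
            bs.indSign v' (B \ A) := by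
          simp only [PBasis.indSign]
          rw [Finset.smul_sum]
          refine Finset.sum_congr rfl fun j _ => ?_
          rw [smul_smul]
          congr 1
          ring
        have hsplit : T + bs.indSign v (B \ A) =
            (1/2 : 𝕜) • (T + αK • bs.indSign ω D) +
            (1/2 : 𝕜) • (T + bs.indSign (fun j => (2:𝕜) * v' j) (B \ A)) := by
          rw [smul_add, smul_add, hhalf2, hdiff]
          module
        rw [hsplit]
        have hN := bs.N_padd ((1/2:𝕜) • (T + αK • bs.indSign ω D))
          ((1/2:𝕜) • (T + bs.indSign (fun j => (2:𝕜) * v' j) (B \ A)))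
        rw [bs.N_smul, bs.N_smul] at hN
        have hhalfn : ‖(1/2 : 𝕜)‖ = 1/2 := by
          rw [norm_div]
          simp
        rw [hhalfn] at hN
        have hdist : ∀ x : ℝ, 0 ≤ x → ((1/2 : ℝ) * x) ^ p = (1/2:ℝ)^p * x ^ p := fun x hx =>
          Real.mul_rpow (by norm_num) hx
        rw [hdist _ (bs.N_nonneg _), hdist _ (bs.N_nonneg _)] at hN
        have hCOREp : bs.N (T + αK • bs.indSign ω D) ^ p ≤ (Cpg ^ 2 * bs.N gh) ^ p :=
          Real.rpow_le_rpow (bs.N_nonneg _)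
            (CORE D hDsub ω (fun j _ => norm_sgn _)) hp.le
        have hIH := ih (fun j => (2:𝕜) * v' j) h2v'le
        have halg1 : (1/2:ℝ)^p * (1 + t⁻¹) = t⁻¹ := by
          have hu : ((2:ℝ))^p = t + 1 := by rw [htdef]; ring
          have h2inv : (1/2:ℝ)^p = (t+1)⁻¹ := by
            rw [one_div, Real.inv_rpow (by norm_num : (0:ℝ) ≤ 2), hu]
          rw [h2inv]
          field_simp
        have halg2 : (1/2:ℝ)^p * (((1/2:ℝ) ^ K * α) ^ p) = ((1/2:ℝ) ^ (K+1) * α) ^ p := by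
          rw [← Real.mul_rpow (by norm_num) (by positivity)]
          congr 1
          rw [pow_succ]
          ring
        have hhp0 : 0 ≤ (1/2:ℝ)^p := Real.rpow_nonneg (by norm_num) _
        refine le_trans hN ?_
        calc (1/2:ℝ)^p * bs.N (T + αK • bs.indSign ω D) ^ p +
              (1/2:ℝ)^p * bs.N (T + bs.indSign (fun j => (2:𝕜) * v' j) (B \ A)) ^ p
            ≤ (1/2:ℝ)^p * (Cpg ^ 2 * bs.N gh) ^ p +
              (1/2:ℝ)^p * (t⁻¹ * (Cpg ^ 2 * bs.N gh) ^ p + (((1/2:ℝ) ^ K * α) ^ p) * Se) := by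
              have := mul_le_mul_of_nonneg_left hCOREp hhp0
              have := mul_le_mul_of_nonneg_left hIH hhp0
              linarith
          _ = t⁻¹ * (Cpg ^ 2 * bs.N gh) ^ p + (((1/2:ℝ) ^ (K+1) * α) ^ p) * Se := by
              rw [← halg2]
              have : (1/2:ℝ)^p * (Cpg ^ 2 * bs.N gh) ^ p +
                  (1/2:ℝ)^p * (t⁻¹ * (Cpg ^ 2 * bs.N gh) ^ p + (((1/2:ℝ) ^ K * α) ^ p) * Se)
                  = ((1/2:ℝ)^p * (1 + t⁻¹)) * (Cpg ^ 2 * bs.N gh) ^ p +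
                    ((1/2:ℝ)^p * (((1/2:ℝ) ^ K * α) ^ p)) * Se := by ring
              rw [this, halg1]
        -- done succ case

    -- pass to the limit in K
    have hKlim : bs.N (fh - bs.proj A fh) ^ p ≤ t⁻¹ * (Cpg ^ 2 * bs.N gh) ^ p := by
      have hident : fh - bs.proj A fh = T + bs.indSign (fun j => bs.coord j fh) (B \ A) := by
        have hsplit : bs.proj (A ∪ B) fh = bs.proj A fh + bs.proj (B \ A) fh := by
          rw [← Finset.union_sdiff_self_eq_union, bs.proj_union _ _ Finset.disjoint_sdiff]
        have hPE : bs.indSign (fun j => bs.coord j fh) (B \ A) = bs.proj (B \ A) fh :=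
          Finset.sum_congr rfl fun j _ => rfl
        rw [hPE, hT, hsplit]
        abel
      have hvle : ∀ j ∈ B \ A, ‖bs.coord j fh‖ ≤ α := by
        intro j hj
        rw [hcoordfh]
        split
        · simpa using hα0
        · exact hαout j (fun hA => (Finset.mem_sdiff.1 hj).2 hA)
      have hKtend : Filter.Tendsto (fun K : ℕ => t⁻¹ * (Cpg ^ 2 * bs.N gh) ^ p +
          (((1/2 : ℝ) ^ K * α) ^ p) * Se) Filter.atTop
          (nhds (t⁻¹ * (Cpg ^ 2 * bs.N gh) ^ p)) := by
        have h1 : Filter.Tendsto (fun K : ℕ => ((1/2 : ℝ) ^ K * α)) Filter.atTop (nhds 0) := by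
          have := (tendsto_pow_atTop_nhds_zero_of_lt_one (by norm_num : (0:ℝ) ≤ 1/2)
            (by norm_num)).mul_const α
          simpa using this
        have h2 : Filter.Tendsto (fun K : ℕ => (((1/2 : ℝ) ^ K * α) ^ p)) Filter.atTop
            (nhds 0) := by
          have hc : ContinuousAt (fun x : ℝ => x ^ p) 0 :=
            Real.continuousAt_rpow_const 0 p (Or.inr hp.le)
          have := hc.tendsto.comp h1
          simpa [Function.comp_def, Real.zero_rpow hp.ne'] using this
        have h3 : Filter.Tendsto (fun K : ℕ => (((1/2 : ℝ) ^ K * α) ^ p) * Se) Filter.atTop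
            (nhds 0) := by simpa using h2.mul_const Se
        simpa using h3.const_add (t⁻¹ * (Cpg ^ 2 * bs.N gh) ^ p)
      refine ge_of_tendsto hKtend (Filter.Eventually.of_forall fun K => ?_)
      rw [hident]
      exact LEMA K _ hvle
    -- error bound for the far projection
    have herr : bs.N (bs.proj Fbig f) ^ p ≤ ((r : ℝ) + 1) * ce ^ p * (δ ^ p) := by
      have h1 : bs.N (bs.proj Fbig f) ^ p ≤ ∑ j ∈ Fbig, bs.N (bs.coord j f • bs.e j) ^ p :=
        bs.N_sum_le hp Fbig _
      have h2 : ∀ j ∈ Fbig, bs.N (bs.coord j f • bs.e j) ^ p ≤ ce ^ p * δ ^ p := by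
        intro j hj
        rw [bs.N_smul, Real.mul_rpow (norm_nonneg _) (bs.N_nonneg _)]
        have ha : ‖bs.coord j f‖ ^ p ≤ δ ^ p :=
          Real.rpow_le_rpow (norm_nonneg _) (hFbigsmall j hj) hp.le
        have hb : bs.N (bs.e j) ^ p ≤ ce ^ p :=
          Real.rpow_le_rpow (bs.N_nonneg _) (hce j) hp.le
        calc ‖bs.coord j f‖ ^ p * bs.N (bs.e j) ^ p ≤ δ ^ p * ce ^ p := by
              apply mul_le_mul ha hb (Real.rpow_nonneg (bs.N_nonneg _) _) (by positivity)
          _ = ce ^ p * δ ^ p := by ring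
      calc bs.N (bs.proj Fbig f) ^ p ≤ ∑ j ∈ Fbig, bs.N (bs.coord j f • bs.e j) ^ p := h1
        _ ≤ ∑ _j ∈ Fbig, ce ^ p * δ ^ p := Finset.sum_le_sum h2
        _ = ((r : ℝ) + 1) * ce ^ p * δ ^ p := by
            rw [Finset.sum_const, hFbigcard]
            push_cast
            ring
    -- transfers
    have htrans1 : bs.N (f - bs.proj A f) ^ p ≤ bs.N (fh - bs.proj A fh) ^ p +
        bs.N (bs.proj Fbig f) ^ p := by
      have hid : f - bs.proj A f = (fh - bs.proj A fh) + bs.proj Fbig f := by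
        have hzero : bs.proj A (bs.proj Fbig f) = 0 := by
          apply bs.proj_eq_zero
          intro m hm
          rw [bs.coord_proj, if_neg (fun hmem => hFbigA m hmem hm)]
        rw [hfh, bs.proj_sub, hzero]
        abel
      rw [hid]
      exact bs.N_padd _ _
    have htrans2 : bs.N gh ^ p ≤ bs.N g ^ p + bs.N (bs.proj Fbig f) ^ p := by
      have hid : gh = g + (-(bs.proj Fbig f)) := by
        rw [hgh, hfh, hgdef]
        abel
      rw [hid]
      calc bs.N (g + -(bs.proj Fbig f)) ^ p ≤ bs.N g ^ p + bs.N (-(bs.proj Fbig f)) ^ p :=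
            bs.N_padd _ _
        _ = bs.N g ^ p + bs.N (bs.proj Fbig f) ^ p := by rw [bs.N_neg]
    -- combine everything
    have hghp : (Cpg ^ 2 * bs.N gh) ^ p = (Cpg ^ 2) ^ p * bs.N gh ^ p :=
      Real.mul_rpow (by positivity) (bs.N_nonneg _)
    have hgp : (Cpg ^ 2 * bs.N g) ^ p = (Cpg ^ 2) ^ p * bs.N g ^ p :=
      Real.mul_rpow (by positivity) (bs.N_nonneg _)
    have hE0 : 0 ≤ bs.N (bs.proj Fbig f) ^ p := Real.rpow_nonneg (bs.N_nonneg _) _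
    have htinv0 : 0 ≤ t⁻¹ := by positivity
    calc bs.N (f - bs.proj A f) ^ p
        ≤ bs.N (fh - bs.proj A fh) ^ p + bs.N (bs.proj Fbig f) ^ p := htrans1
      _ ≤ t⁻¹ * (Cpg ^ 2 * bs.N gh) ^ p + bs.N (bs.proj Fbig f) ^ p := by linarith [hKlim]
      _ ≤ t⁻¹ * ((Cpg ^ 2) ^ p * (bs.N g ^ p + bs.N (bs.proj Fbig f) ^ p)) +
            bs.N (bs.proj Fbig f) ^ p := by
          rw [hghp]
          have h0 : 0 ≤ (Cpg ^ 2) ^ p := by positivity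
          have := mul_le_mul_of_nonneg_left htrans2 h0
          nlinarith
      _ ≤ t⁻¹ * (Cpg ^ 2 * bs.N g) ^ p +
            (t⁻¹ * (Cpg ^ 2) ^ p + 1) * (((r : ℝ) + 1) * ce ^ p * (δ ^ p)) := by
          rw [hgp]
          have h0 : 0 ≤ t⁻¹ * (Cpg ^ 2) ^ p := by positivity
          have h1 := mul_le_mul_of_nonneg_left herr h0
          nlinarith [herr]
  -- pass to the limit in n
  have htend : Filter.Tendsto (fun n : ℕ => t⁻¹ * (Cpg ^ 2 * bs.N g) ^ p +
      (t⁻¹ * (Cpg ^ 2) ^ p + 1) * (((r : ℝ) + 1) * ce ^ p * (((1/2 : ℝ) ^ n) ^ p)))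
      Filter.atTop (nhds (t⁻¹ * (Cpg ^ 2 * bs.N g) ^ p)) := by
    have h1 : Filter.Tendsto (fun n : ℕ => ((1/2 : ℝ) ^ n)) Filter.atTop (nhds 0) := by
      apply tendsto_pow_atTop_nhds_zero_of_lt_one (by norm_num) (by norm_num)
    have h2 : Filter.Tendsto (fun n : ℕ => (((1/2 : ℝ) ^ n) ^ p)) Filter.atTop (nhds 0) := by
      have hc : ContinuousAt (fun x : ℝ => x ^ p) 0 :=
        Real.continuousAt_rpow_const 0 p (Or.inr hp.le)
      have := hc.tendsto.comp h1
      simpa [Function.comp_def, Real.zero_rpow hp.ne'] using this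
    have h3 : Filter.Tendsto (fun n : ℕ => (t⁻¹ * (Cpg ^ 2) ^ p + 1) *
        (((r : ℝ) + 1) * ce ^ p * (((1/2 : ℝ) ^ n) ^ p))) Filter.atTop (nhds 0) := by
      have h4 := (h2.const_mul (((r : ℝ) + 1) * ce ^ p)).const_mul (t⁻¹ * (Cpg ^ 2) ^ p + 1)
      simpa using h4
    have h5 := h3.const_add (t⁻¹ * (Cpg ^ 2 * bs.N g) ^ p)
    simpa using h5
  exact ge_of_tendsto htend (Filter.Eventually.of_forall key)
end
end

section
/- Let 0 < p ≤ 1, let X be a p-Banach space over 𝔽 = ℝ or ℂ, and let 𝒳 be a basis of X that is C_pgu-URGPCC. Then 𝒳 is democratic with democracy constant D ≤ C_pgu²; that is, ‖𝟙_A‖ ≤ C_pgu²·‖𝟙_B‖ for all finite sets A, B ⊂ ℕ with |A| ≤ |B|. -/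
open scoped BigOperators

noncomputable section

namespace PBasis

variable {𝕜 : Type*} [RCLike 𝕜] {X : Type*} [AddCommGroup X] [Module 𝕜 X] {p : ℝ}

theorem coord_ind' (bs : PBasis 𝕜 X p) (n : ℕ) (T : Finset ℕ) :
    bs.coord n (bs.ind T) = if n ∈ T then 1 else 0 := by
  unfold PBasis.ind
  rw [map_sum]
  simp only [bs.biorth]
  exact Finset.sum_ite_eq T n fun _ => (1 : 𝕜)

theorem minCoef_eq_one (bs : PBasis 𝕜 X p) (f : X) (A : Finset ℕ)
    (h1 : ∃ n ∈ A, ‖bs.coord n f‖ = 1) (h2 : ∀ n ∈ A, 1 ≤ ‖bs.coord n f‖) :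
    bs.minCoef f A = 1 := by
  obtain ⟨n, hn, he⟩ := h1
  have hmem : (1:ℝ) ∈ (fun n => ‖bs.coord n f‖) '' (A : Set ℕ) :=
    ⟨n, by simpa using hn, he⟩
  have hbdd : ∀ x ∈ (fun n => ‖bs.coord n f‖) '' (A : Set ℕ), 1 ≤ x := by
    rintro x ⟨m, hm, rfl⟩; exact h2 m (by simpa using hm)
  exact le_antisymm (csInf_le ⟨1, hbdd⟩ hmem) (le_csInf ⟨1, hmem⟩ hbdd)

end PBasis

/-- If a basis of a `p`-Banach space over `ℝ` or `ℂ` is `C_pgu`-URGPCC, then it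
is democratic with democracy constant `D ≤ C_pgu²`. -/
theorem URGPCC_implies_democratic {𝕜 : Type*} [RCLike 𝕜] {X : Type*} [AddCommGroup X]
    [Module 𝕜 X] {p : ℝ} (hp : 0 < p) (hp1 : p ≤ 1) (bs : PBasis 𝕜 X p)
    (Cpgu : ℝ) (hCpgu : 0 < Cpgu) (h : bs.IsURGPCCWith Cpgu) :
    bs.IsDemocraticWith (Cpgu ^ 2) := by
  intro A B hAB
  rcases A.eq_empty_or_nonempty with rfl | hA
  · have h0 : bs.ind (∅ : Finset ℕ) = 0 := Finset.sum_empty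
    rw [h0, (bs.N_eq_zero_iff 0).mpr rfl]
    exact mul_nonneg (by positivity) (bs.N_nonneg _)
  -- choose S disjoint from A ∪ B with |S| = |A|
  set M := (A ∪ B).sup id with hM
  set S := Finset.Ico (M+1) (M+1+A.card) with hSdef
  have hScard : S.card = A.card := by simp [hSdef]
  have hSA : Disjoint S A := by
    rw [Finset.disjoint_left]; intro n hn hnA
    have h1 : n ≤ M := Finset.le_sup (f := id) (Finset.mem_union_left _ hnA)
    have h2 : M + 1 ≤ n := (Finset.mem_Ico.mp hn).1
    omega
  have hSB : Disjoint S B := by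
    rw [Finset.disjoint_left]; intro n hn hnB
    have h1 : n ≤ M := Finset.le_sup (f := id) (Finset.mem_union_right _ hnB)
    have h2 : M + 1 ≤ n := (Finset.mem_Ico.mp hn).1
    omega
  have hSne : S.Nonempty := Finset.card_pos.mp (hScard ▸ Finset.card_pos.mpr hA)
  -- Step 1 : ‖1_A‖ ≤ C ‖1_S‖
  set f₁ := bs.ind (A ∪ S) with hf₁
  have hcoord₁ : ∀ n, bs.coord n f₁ = if n ∈ A ∪ S then 1 else 0 :=
    fun n => bs.coord_ind' n _
  have hg₁ : bs.IsGreedySet f₁ S := by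
    intro n hn m hm
    rw [hcoord₁, hcoord₁, if_pos (Finset.mem_union_right _ hn)]
    split <;> simp
  have hmin₁ : bs.minCoef f₁ S = 1 := by
    apply bs.minCoef_eq_one
    · obtain ⟨n, hn⟩ := hSne
      exact ⟨n, hn, by rw [hcoord₁, if_pos (Finset.mem_union_right _ hn)]; simp⟩
    · intro n hn; rw [hcoord₁, if_pos (Finset.mem_union_right _ hn)]; simp
  have hproj₁ : bs.proj S f₁ = bs.ind S := by
    unfold PBasis.proj PBasis.ind
    refine Finset.sum_congr rfl fun n hn => ?_
    rw [hcoord₁, if_pos (Finset.mem_union_right _ hn), one_smul]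
  have hsplit₁ : f₁ = bs.ind A + bs.ind S := by
    rw [hf₁]; unfold PBasis.ind; exact Finset.sum_union hSA.symm
  have step1 := h f₁ S A hg₁ hScard.symm
  rw [hmin₁, hproj₁, hsplit₁] at step1
  simp only [RCLike.ofReal_one, one_smul, add_sub_cancel_right, add_sub_cancel_left] at step1
  -- Step 2 : ‖1_S‖ ≤ C ‖1_B‖
  obtain ⟨B₀, hB₀sub, hB₀card⟩ := Finset.exists_subset_card_eq hAB
  have hB₀ne : B₀.Nonempty := Finset.card_pos.mp (hB₀card ▸ Finset.card_pos.mpr hA)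
  set f₂ := bs.ind S + bs.ind B + bs.ind (B \ B₀) with hf₂
  have hcoord₂ : ∀ n, bs.coord n f₂ =
      (if n ∈ S then 1 else 0) + (if n ∈ B then 1 else 0)
        + (if n ∈ B \ B₀ then 1 else 0) := by
    intro n
    rw [hf₂, map_add, map_add, bs.coord_ind', bs.coord_ind', bs.coord_ind']
  have hnormB : ∀ n ∈ B, 1 ≤ ‖bs.coord n f₂‖ := by
    intro n hn
    rw [hcoord₂, if_neg (Finset.disjoint_right.mp hSB hn), if_pos hn]
    split <;> norm_num
  have hnormOut : ∀ m, m ∉ B → ‖bs.coord m f₂‖ ≤ 1 := by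
    intro m hm
    rw [hcoord₂, if_neg hm, if_neg (fun hc => hm (Finset.mem_sdiff.mp hc).1)]
    split <;> norm_num
  have hg₂ : bs.IsGreedySet f₂ B := fun n hn m hm =>
    le_trans (hnormOut m hm) (hnormB n hn)
  have hmin₂ : bs.minCoef f₂ B = 1 := by
    obtain ⟨b₀, hb₀⟩ := hB₀ne
    refine bs.minCoef_eq_one _ _ ⟨b₀, hB₀sub hb₀, ?_⟩ hnormB
    rw [hcoord₂, if_neg (Finset.disjoint_right.mp hSB (hB₀sub hb₀)),
      if_pos (hB₀sub hb₀), if_neg (fun hc => (Finset.mem_sdiff.mp hc).2 hb₀)]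
    norm_num
  have hproj₂ : bs.proj B f₂ = bs.ind B + bs.ind (B \ B₀) := by
    unfold PBasis.proj
    have hterm : ∀ n ∈ B, bs.coord n f₂ • bs.e n
        = bs.e n + (if n ∈ B \ B₀ then bs.e n else 0) := by
      intro n hn
      rw [hcoord₂, if_neg (Finset.disjoint_right.mp hSB hn), if_pos hn]
      split <;> simp [add_smul]
    rw [Finset.sum_congr rfl hterm, Finset.sum_add_distrib]
    congr 1
    rw [Finset.sum_ite_mem, Finset.inter_eq_right.mpr Finset.sdiff_subset]
    rfl
  set B' := S ∪ (B \ B₀) with hB'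
  have hdisj' : Disjoint S (B \ B₀) := hSB.mono_right Finset.sdiff_subset
  have hB'card : B'.card = B.card := by
    rw [hB', Finset.card_union_of_disjoint hdisj', hScard,
      Finset.card_sdiff_of_subset hB₀sub, hB₀card]
    omega
  have hindB' : bs.ind B' = bs.ind S + bs.ind (B \ B₀) := Finset.sum_union hdisj'
  have step2 := h f₂ B B' hg₂ hB'card
  rw [hmin₂, hproj₂, hindB'] at step2
  simp only [RCLike.ofReal_one, one_smul] at step2
  rw [hf₂] at step2
  have e1 : bs.ind S + bs.ind B + bs.ind (B \ B₀) - (bs.ind B + bs.ind (B \ B₀))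
      = bs.ind S := by abel
  have e2 : bs.ind S + bs.ind B + bs.ind (B \ B₀) - (bs.ind S + bs.ind (B \ B₀))
      = bs.ind B := by abel
  rw [e1, e2] at step2
  calc bs.N (bs.ind A) ≤ Cpgu * bs.N (bs.ind S) := step1
    _ ≤ Cpgu * (Cpgu * bs.N (bs.ind B)) := mul_le_mul_of_nonneg_left step2 hCpgu.le
    _ = Cpgu ^ 2 * bs.N (bs.ind B) := by ring
end
end
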